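/- arXiv:1801.01412 — 3 statements merged into one kernel-verified Lean document; each statement's English description precedes it below -/
import Mathlib

section
/- Let T, p, q, P, Q be as in the setup with Tr(P) = Tr(Q) = 1. If T(P) = I_m or T*(Q) = I_n, then cap(T, P, Q) ≤ 1. -/
open Matrix BigOperators

noncomputable section

/-- `η_j` : the projection onto the first `j` coordinates, as a `j × k` matrix. -/
def proj (j k : ℕ) : Matrix (Fin j) (Fin k) ℂ :=
  Matrix.of fun i l => if (i : ℕ) = (l : ℕ) then 1 else 0

/-- `Δa_j = a_j − a_{j+1}`, with the convention `a_{k+1} = 0`. -/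
def delta {k : ℕ} (a : Fin k → ℝ) (j : Fin k) : ℝ :=
  a j - (if h : (j : ℕ) + 1 < k then a ⟨(j : ℕ) + 1, h⟩ else 0)

/-- Integer version of `delta`. -/
def deltaNat {k : ℕ} (a : Fin k → ℕ) (j : Fin k) : ℕ :=
  a j - (if h : (j : ℕ) + 1 < k then a ⟨(j : ℕ) + 1, h⟩ else 0)

/-- The relative determinant `det(diag a, X) = ∏_j det(η_j X η_j†)^{Δa_j}` (real exponents,
with the convention `0 ^ 0 = 1`). -/
def relDet {k : ℕ} (a : Fin k → ℝ) (X : Matrix (Fin k) (Fin k) ℂ) : ℝ :=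
  ∏ j : Fin k,
    ((proj ((j : ℕ) + 1) k * X * (proj ((j : ℕ) + 1) k)ᴴ).det.re) ^ (delta a j)

/-- Complex relative determinant for integral weights. -/
def relDetC {k : ℕ} (a : Fin k → ℕ) (X : Matrix (Fin k) (Fin k) ℂ) : ℂ :=
  ∏ j : Fin k,
    ((proj ((j : ℕ) + 1) k * X * (proj ((j : ℕ) + 1) k)ᴴ).det) ^ (deltaNat a j)

/-- The completely positive map `T(X) = Σ A_i X A_i†` with Kraus operators `A i`. -/
def cpMap {ι κ : Type*} [Fintype ι] {r : ℕ} (A : Fin r → Matrix κ ι ℂ)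
    (X : Matrix ι ι ℂ) : Matrix κ κ ℂ :=
  ∑ i, A i * X * (A i)ᴴ

/-- The dual completely positive map `T*(Y) = Σ A_i† Y A_i`. -/
def cpDual {ι κ : Type*} [Fintype κ] {r : ℕ} (A : Fin r → Matrix κ ι ℂ)
    (Y : Matrix κ κ ℂ) : Matrix ι ι ℂ :=
  ∑ i, (A i)ᴴ * Y * A i

/-- Frobenius norm `‖A‖ = √(Tr A Aᴴ)`. -/
def frob {ι κ : Type*} [Fintype ι] [Fintype κ] (A : Matrix ι κ ℂ) : ℝ :=
  Real.sqrt (A * Aᴴ).trace.re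

/-- Upper triangular predicate. -/
def UT {k : ℕ} (g : Matrix (Fin k) (Fin k) ℂ) : Prop :=
  ∀ i j : Fin k, j < i → g i j = 0

/-- Capacity with specified marginals:
`cap(T,P,Q) = inf over invertible upper triangular h of det(Q, T(hPh†)) / det(P, h†h)`. -/
def cap {n m r : ℕ} (A : Fin r → Matrix (Fin m) (Fin n) ℂ)
    (p : Fin n → ℝ) (q : Fin m → ℝ) : ℝ :=
  sInf { x : ℝ | ∃ h : Matrix (Fin n) (Fin n) ℂ, IsUnit h.det ∧ UT h ∧
    x = relDet q (cpMap A (h * Matrix.diagonal (fun j => (p j : ℂ)) * hᴴ)) /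
        relDet p (hᴴ * h) }

/-- Span of the first `i` standard basis vectors of `ℂ^k`. -/
def coordSub (k i : ℕ) : Submodule ℂ (Fin k → ℂ) where
  carrier := { x | ∀ l : Fin k, i ≤ (l : ℕ) → x l = 0 }
  add_mem' := by intro a b ha hb l hl; simp [ha l hl, hb l hl]
  zero_mem' := by intro l _; rfl
  smul_mem' := by intro c x hx l hl; simp [hx l hl]

/-- `(L, R)` is a `T`-independent pair: `A_i R ⊥ L` for all `i`. -/
def TIndep {n m r : ℕ} (A : Fin r → Matrix (Fin m) (Fin n) ℂ)
    (L : Submodule ℂ (Fin m → ℂ)) (R : Submodule ℂ (Fin n → ℂ)) : Prop :=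
  ∀ i : Fin r, ∀ x ∈ R, ∀ y ∈ L, star y ⬝ᵥ (A i).mulVec x = 0

/-- `(P,Q)`-rank-nondecreasingness. -/
def rankNonDec {n m r : ℕ} (A : Fin r → Matrix (Fin m) (Fin n) ℂ)
    (p : Fin n → ℝ) (q : Fin m → ℝ) : Prop :=
  ∀ L : Submodule ℂ (Fin m → ℂ), ∀ R : Submodule ℂ (Fin n → ℂ), TIndep A L R →
    (∑ i : Fin m, delta q i * (Module.finrank ℂ ↥(coordSub m ((i : ℕ) + 1) ⊓ L) : ℝ)) +
      (∑ j : Fin n, delta p j * (Module.finrank ℂ ↥(coordSub n ((j : ℕ) + 1) ⊓ R) : ℝ))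
      ≤ ∑ j, p j

/-- `λ'_{i+1}`: number of parts of `lam` that are `> i` (0-indexed conjugate partition). -/
def conj' {k : ℕ} (lam : Fin k → ℕ) (i : ℕ) : ℕ :=
  (Finset.univ.filter fun j : Fin k => i < lam j).card

lemma conj'_le {k : ℕ} (lam : Fin k → ℕ) (i : ℕ) : conj' lam i ≤ k := by
  classical
  calc conj' lam i ≤ Finset.univ.card := Finset.card_filter_le _ _
    _ = k := by simp

/-- Index set for the blocks of `G_λ`; it has cardinality `Σ_i λ'_i = Σ_j λ_j`. -/
abbrev lamIdx {k : ℕ} (lam : Fin k → ℕ) : Type :=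
  Σ i : Fin (Finset.univ.sup lam), Fin (conj' lam (i : ℕ))

/-- The gadget map `G_λ(X) = ⊕_{i=1}^{λ_1} η_{λ'_i} X η_{λ'_i}†`. -/
def Gmap {k : ℕ} (lam : Fin k → ℕ) (X : Matrix (Fin k) (Fin k) ℂ) :
    Matrix (lamIdx lam) (lamIdx lam) ℂ := fun s t =>
  if s.1 = t.1 then
    X (Fin.castLE (conj'_le lam (s.1 : ℕ)) s.2) (Fin.castLE (conj'_le lam (t.1 : ℕ)) t.2)
  else 0

/-- The adjoint `G_λ*` of the gadget map with respect to the trace inner product. -/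
def GmapAdj {k : ℕ} (lam : Fin k → ℕ) (Y : Matrix (lamIdx lam) (lamIdx lam) ℂ) :
    Matrix (Fin k) (Fin k) ℂ := fun a b =>
  ∑ i : Fin (Finset.univ.sup lam),
    if h : (a : ℕ) < conj' lam (i : ℕ) ∧ (b : ℕ) < conj' lam (i : ℕ) then
      Y ⟨i, ⟨(a : ℕ), h.1⟩⟩ ⟨i, ⟨(b : ℕ), h.2⟩⟩
    else 0

/-- The reduction `trun_{P,Q} T = G_q ∘ T ∘ G_p*`. -/
def trun {n m r : ℕ} (A : Fin r → Matrix (Fin m) (Fin n) ℂ) (p : Fin n → ℕ) (q : Fin m → ℕ)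
    (X : Matrix (lamIdx p) (lamIdx p) ℂ) : Matrix (lamIdx q) (lamIdx q) ℂ :=
  Gmap q (cpMap A (GmapAdj p X))

/-- The dual of the reduction: `(trun_{P,Q} T)* = G_p ∘ T* ∘ G_q*`. -/
def trunDual {n m r : ℕ} (A : Fin r → Matrix (Fin m) (Fin n) ℂ) (p : Fin n → ℕ) (q : Fin m → ℕ)
    (Y : Matrix (lamIdx q) (lamIdx q) ℂ) : Matrix (lamIdx p) (lamIdx p) ℂ :=
  Gmap p (cpDual A (GmapAdj q Y))

/-- Shannon entropy with convention `0 · log 0 = 0` (note `Real.log 0 = 0`). -/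
def entropy {k : ℕ} (p : Fin k → ℝ) : ℝ := -∑ j, p j * Real.log (p j)

/-- The distance-to-target measure `ds_{P,Q}(T)`. -/
def ds {n m r : ℕ} (A : Fin r → Matrix (Fin m) (Fin n) ℂ)
    (p : Fin n → ℝ) (q : Fin m → ℝ) : ℝ :=
  (∑ j : Fin n, delta p j *
      (frob (proj ((j : ℕ) + 1) n *
        (cpDual A (Matrix.diagonal fun i => (q i : ℂ)) - 1) * (proj ((j : ℕ) + 1) n)ᴴ)) ^ 2) +
    ∑ i : Fin m, delta q i *
      (frob (proj ((i : ℕ) + 1) m *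
        (cpMap A (Matrix.diagonal fun j => (p j : ℂ)) - 1) * (proj ((i : ℕ) + 1) m)ᴴ)) ^ 2

/-- `(u_1,…,u_n)` can be approximately put in `Q`-isotropic position with respect to `p`. -/
def approxIso {m n : ℕ} (u : Fin n → Fin m → ℂ) (p : Fin n → ℝ)
    (Q : Matrix (Fin m) (Fin m) ℂ) : Prop :=
  ∀ ε : ℝ, 0 < ε → ∃ B : Matrix (Fin m) (Fin m) ℂ, IsUnit B.det ∧
    frob ((∑ i : Fin n,
      (((p i / ∑ a, Complex.normSq (B.mulVec (u i) a)) : ℝ) : ℂ) •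
        Matrix.vecMulVec (B.mulVec (u i)) (star (B.mulVec (u i)))) - Q) ≤ ε

section CapHelpers

open ComplexOrder

lemma proj_mul_proj {j k : ℕ} (hj : j ≤ k) (X : Matrix (Fin k) (Fin k) ℂ) :
    proj j k * X * (proj j k)ᴴ = X.submatrix (Fin.castLE hj) (Fin.castLE hj) := by
  have hcond : ∀ (a : Fin j) (l : Fin k), ((a : ℕ) = (l : ℕ)) = (Fin.castLE hj a = l) := by
    intro a l; rw [eq_iff_iff, Fin.ext_iff]; rfl
  ext a b
  simp only [Matrix.mul_apply, Matrix.conjTranspose_apply, proj, Matrix.of_apply, hcond,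
    apply_ite (star : ℂ → ℂ), star_one, star_zero, ite_mul, mul_ite, one_mul, mul_one,
    zero_mul, mul_zero, Finset.sum_ite_eq, Finset.mem_univ, if_true, Matrix.submatrix_apply]

lemma submatrix_one_castLE {j k : ℕ} (hj : j ≤ k) :
    (1 : Matrix (Fin k) (Fin k) ℂ).submatrix (Fin.castLE hj) (Fin.castLE hj) = 1 := by
  ext a b
  simp [Matrix.one_apply, Fin.castLE_inj]

lemma relDet_one {k : ℕ} (a : Fin k → ℝ) : relDet a (1 : Matrix (Fin k) (Fin k) ℂ) = 1 := by
  unfold relDet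
  apply Finset.prod_eq_one
  intro j _
  rw [proj_mul_proj (Nat.succ_le_of_lt j.isLt), submatrix_one_castLE, Matrix.det_one]
  simp [Real.one_rpow]

lemma herm_trace {k : ℕ} {N : Matrix (Fin k) (Fin k) ℂ} (hN : N.IsHermitian) :
    N.trace = ∑ i, (hN.eigenvalues i : ℂ) := by
  conv_lhs => rw [hN.spectral_theorem]
  rw [Unitary.conjStarAlgAut_apply, Matrix.trace_mul_cycle,
    Matrix.mem_unitaryGroup_iff'.mp hN.eigenvectorUnitary.2, Matrix.one_mul,
    Matrix.trace_diagonal]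
  rfl

lemma psd_det_re_eq {k : ℕ} {N : Matrix (Fin k) (Fin k) ℂ} (hN : N.PosSemidef) :
    N.det.re = ∏ i, hN.isHermitian.eigenvalues i := by
  rw [hN.isHermitian.det_eq_prod_eigenvalues]
  norm_cast

lemma psd_trace_re_eq {k : ℕ} {N : Matrix (Fin k) (Fin k) ℂ} (hN : N.PosSemidef) :
    N.trace.re = ∑ i, hN.isHermitian.eigenvalues i := by
  rw [herm_trace hN.isHermitian]
  norm_cast

lemma psd_det_re_nonneg {k : ℕ} {N : Matrix (Fin k) (Fin k) ℂ} (hN : N.PosSemidef) :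
    0 ≤ N.det.re := by
  rw [psd_det_re_eq hN]
  exact Finset.prod_nonneg fun i _ => hN.eigenvalues_nonneg i

lemma psd_det_re_le {k : ℕ} {N : Matrix (Fin k) (Fin k) ℂ} (hN : N.PosSemidef) :
    N.det.re ≤ Real.exp (N.trace.re - k) := by
  rw [psd_det_re_eq hN, psd_trace_re_eq hN]
  calc ∏ i, hN.isHermitian.eigenvalues i
      ≤ ∏ i, Real.exp (hN.isHermitian.eigenvalues i - 1) := by
        refine Finset.prod_le_prod (fun i _ => hN.eigenvalues_nonneg i) (fun i _ => ?_)
        have := Real.add_one_le_exp (hN.isHermitian.eigenvalues i - 1)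
        linarith
    _ = Real.exp (∑ i, (hN.isHermitian.eigenvalues i - 1)) := (Real.exp_sum _ _).symm
    _ = Real.exp (∑ i, hN.isHermitian.eigenvalues i - k) := by
        rw [Finset.sum_sub_distrib]
        simp [Finset.card_univ]

lemma cpMap_posSemidef {n m r : ℕ} (A : Fin r → Matrix (Fin m) (Fin n) ℂ)
    {X : Matrix (Fin n) (Fin n) ℂ} (hX : X.PosSemidef) : (cpMap A X).PosSemidef := by
  unfold cpMap
  refine Finset.sum_induction _ _ (fun a b ha hb => ha.add hb) .zero (fun i _ => ?_)
  exact hX.mul_mul_conjTranspose_same (A i)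

lemma relDet_nonneg {k : ℕ} (a : Fin k → ℝ) {X : Matrix (Fin k) (Fin k) ℂ}
    (hX : X.PosSemidef) : 0 ≤ relDet a X :=
  Finset.prod_nonneg fun j _ => Real.rpow_nonneg
    (psd_det_re_nonneg (hX.mul_mul_conjTranspose_same _)) _

lemma delta_nonneg {k : ℕ} {a : Fin k → ℝ} (ha : Antitone a) (ha0 : ∀ j, 0 ≤ a j) (j : Fin k) :
    0 ≤ delta a j := by
  unfold delta
  split
  · next h =>
    have hle : j ≤ (⟨(j : ℕ) + 1, h⟩ : Fin k) := by
      rw [Fin.le_def]; exact Nat.le_succ _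
    have := ha hle
    linarith
  · simpa using ha0 j

lemma abel_aux (f C : ℕ → ℝ) (M : ℕ) :
    ∑ i ∈ Finset.range M, (f i - f (i + 1)) * (∑ a ∈ Finset.range (i + 1), C a)
      = ∑ a ∈ Finset.range M, f a * C a - f M * ∑ a ∈ Finset.range M, C a := by
  induction M with
  | zero => simp
  | succ M ih =>
    rw [Finset.sum_range_succ, ih, Finset.sum_range_succ (f := fun a => f a * C a),
      Finset.sum_range_succ (f := C)]
    ring

lemma relDet_le_one {k : ℕ} (q : Fin k → ℝ) (hq : Antitone q) (hq0 : ∀ i, 0 ≤ q i)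
    (hq1 : ∑ i, q i = 1) {M : Matrix (Fin k) (Fin k) ℂ} (hM : M.PosSemidef)
    (htr : ∑ a, q a * (M a a).re = 1) : relDet q M ≤ 1 := by
  classical
  set N : Fin k → ℝ := fun j =>
    (proj ((j : ℕ) + 1) k * M * (proj ((j : ℕ) + 1) k)ᴴ).trace.re with hN
  have hpsd : ∀ j : Fin k, (proj ((j : ℕ) + 1) k * M * (proj ((j : ℕ) + 1) k)ᴴ).PosSemidef :=
    fun j => hM.mul_mul_conjTranspose_same _
  have step1 : relDet q M ≤ ∏ j : Fin k, Real.exp ((N j - ((j : ℕ) + 1)) * delta q j) := by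
    unfold relDet
    refine Finset.prod_le_prod
      (fun j _ => Real.rpow_nonneg (psd_det_re_nonneg (hpsd j)) _) (fun j _ => ?_)
    have h1 : ((proj ((j : ℕ) + 1) k * M * (proj ((j : ℕ) + 1) k)ᴴ).det.re) ^ (delta q j)
        ≤ (Real.exp (N j - ((j : ℕ) + 1))) ^ (delta q j) := by
      refine Real.rpow_le_rpow (psd_det_re_nonneg (hpsd j)) ?_ (delta_nonneg hq hq0 j)
      simpa using psd_det_re_le (hpsd j)
    refine h1.trans_eq ?_
    rw [Real.rpow_def_of_pos (Real.exp_pos _), Real.log_exp]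
  refine step1.trans_eq ?_
  rw [← Real.exp_sum]
  have hsum0 : ∑ j : Fin k, (N j - ((j : ℕ) + 1)) * delta q j = 0 := by
    -- the Abel-summation computation
    set C : ℕ → ℝ := fun a => if h : a < k then (M ⟨a, h⟩ ⟨a, h⟩).re - 1 else 0 with hC
    set F : ℕ → ℝ := fun i => if h : i < k then q ⟨i, h⟩ else 0 with hF
    have hNval : ∀ j : Fin k, N j - ((j : ℕ) + 1) = ∑ a ∈ Finset.range ((j : ℕ) + 1), C a := by
      intro j
      have hjk : (j : ℕ) + 1 ≤ k := Nat.succ_le_of_lt j.isLt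
      have htr' : N j = ∑ a : Fin ((j : ℕ) + 1),
          (M (Fin.castLE hjk a) (Fin.castLE hjk a)).re := by
        rw [hN]
        simp only [proj_mul_proj hjk, Matrix.trace, Matrix.diag, Matrix.submatrix_apply]
        rw [Complex.re_sum]
      rw [htr', ← Fin.sum_univ_eq_sum_range C ((j : ℕ) + 1)]
      have : ∀ a : Fin ((j : ℕ) + 1),
          C (a : ℕ) = (M (Fin.castLE hjk a) (Fin.castLE hjk a)).re - 1 := by
        intro a
        have ha : (a : ℕ) < k := lt_of_lt_of_le a.isLt hjk
        rw [hC]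
        simp only [dif_pos ha]
        rfl
      rw [Finset.sum_congr rfl (fun a _ => this a), Finset.sum_sub_distrib]
      simp [Finset.card_univ]
    have hdelta : ∀ j : Fin k, delta q j = F (j : ℕ) - F ((j : ℕ) + 1) := by
      intro j
      rw [hF, delta]
      simp only [dif_pos j.isLt]
    calc ∑ j : Fin k, (N j - ((j : ℕ) + 1)) * delta q j
        = ∑ j : Fin k, (F (j : ℕ) - F ((j : ℕ) + 1)) * ∑ a ∈ Finset.range ((j : ℕ) + 1), C a := by
          refine Finset.sum_congr rfl (fun j _ => ?_)
          rw [hNval j, hdelta j, mul_comm]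
      _ = ∑ i ∈ Finset.range k,
          (F i - F (i + 1)) * ∑ a ∈ Finset.range (i + 1), C a := by
          rw [← Fin.sum_univ_eq_sum_range (fun i => (F i - F (i + 1)) *
            ∑ a ∈ Finset.range (i + 1), C a) k]
      _ = ∑ a ∈ Finset.range k, F a * C a - F k * ∑ a ∈ Finset.range k, C a := abel_aux F C k
      _ = ∑ a ∈ Finset.range k, F a * C a := by
          rw [hF]; simp
      _ = ∑ a : Fin k, q a * ((M a a).re - 1) := by
          rw [← Fin.sum_univ_eq_sum_range (fun a => F a * C a) k]
          refine Finset.sum_congr rfl (fun a _ => ?_)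
          rw [hF, hC]
          simp only [dif_pos a.isLt]
      _ = 0 := by
          simp only [mul_sub, Finset.sum_sub_distrib, mul_one]
          rw [htr, hq1, sub_self]

  rw [hsum0, Real.exp_zero]

end CapHelpers

open ComplexOrder in
/-- Lemma (capacity upper bound): if `Tr P = Tr Q = 1` and `T(P) = I_m` or `T*(Q) = I_n`,
then `cap(T, P, Q) ≤ 1`. -/
theorem stmt13 {n m r : ℕ} (A : Fin r → Matrix (Fin m) (Fin n) ℂ)
    (p : Fin n → ℝ) (q : Fin m → ℝ)
    (hp : Antitone p) (hp0 : ∀ j, 0 ≤ p j) (hq : Antitone q) (hq0 : ∀ i, 0 ≤ q i)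
    (hTrP : ∑ j, p j = 1) (hTrQ : ∑ i, q i = 1)
    (hT : cpMap A (Matrix.diagonal fun j => (p j : ℂ)) = 1 ∨
          cpDual A (Matrix.diagonal fun i => (q i : ℂ)) = 1) :
    cap A p q ≤ 1 := by
  classical
  have hPpsd : (Matrix.diagonal fun j : Fin n => (p j : ℂ)).PosSemidef :=
    Matrix.posSemidef_diagonal_iff.mpr fun j => Complex.zero_le_real.mpr (hp0 j)
  have hbdd : BddBelow { x : ℝ | ∃ h : Matrix (Fin n) (Fin n) ℂ, IsUnit h.det ∧ UT h ∧
      x = relDet q (cpMap A (h * Matrix.diagonal (fun j => (p j : ℂ)) * hᴴ)) /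
          relDet p (hᴴ * h) } := by
    refine ⟨0, fun x hx => ?_⟩
    obtain ⟨h, -, -, rfl⟩ := hx
    exact div_nonneg
      (relDet_nonneg _ (cpMap_posSemidef A (hPpsd.mul_mul_conjTranspose_same h)))
      (relDet_nonneg _ (Matrix.posSemidef_conjTranspose_mul_self h))
  have hmem : relDet q (cpMap A (Matrix.diagonal fun j => (p j : ℂ)))
      ∈ { x : ℝ | ∃ h : Matrix (Fin n) (Fin n) ℂ, IsUnit h.det ∧ UT h ∧
        x = relDet q (cpMap A (h * Matrix.diagonal (fun j => (p j : ℂ)) * hᴴ)) /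
            relDet p (hᴴ * h) } := by
    refine ⟨1, by simp, fun i j hij => Matrix.one_apply_ne (ne_of_gt hij), ?_⟩
    rw [Matrix.conjTranspose_one, Matrix.mul_one, Matrix.one_mul, Matrix.one_mul,
      relDet_one, div_one]
  have hcap : cap A p q ≤ relDet q (cpMap A (Matrix.diagonal fun j => (p j : ℂ))) :=
    csInf_le hbdd hmem
  rcases hT with hT | hT
  · rw [hT, relDet_one] at hcap
    exact hcap
  · refine hcap.trans (relDet_le_one q hq hq0 hTrQ (cpMap_posSemidef A hPpsd) ?_)
    -- trace identity: ∑ q_a (T(P))_{aa} = Tr(Q T(P)) = Tr(T*(Q) P) = Tr P = 1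
    have key : (Matrix.diagonal (fun i => (q i : ℂ)) *
        cpMap A (Matrix.diagonal fun j => (p j : ℂ))).trace = 1 := by
      unfold cpMap
      rw [Finset.mul_sum, Matrix.trace_sum]
      have hterm : ∀ i : Fin r, (Matrix.diagonal (fun i => (q i : ℂ)) *
          (A i * Matrix.diagonal (fun j => (p j : ℂ)) * (A i)ᴴ)).trace
          = ((A i)ᴴ * Matrix.diagonal (fun i => (q i : ℂ)) * A i *
              Matrix.diagonal (fun j => (p j : ℂ))).trace := by
        intro i
        simp only [← Matrix.mul_assoc]
        rw [Matrix.trace_mul_comm]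
        simp only [← Matrix.mul_assoc]
      rw [Finset.sum_congr rfl fun i _ => hterm i, ← Matrix.trace_sum, ← Finset.sum_mul]
      have h1 : (∑ i, (A i)ᴴ * Matrix.diagonal (fun i => (q i : ℂ)) * A i) = 1 := by
        have := hT
        unfold cpDual at this
        simpa only [Matrix.mul_assoc] using this
      rw [show (∑ i, (A i)ᴴ * Matrix.diagonal (fun i => (q i : ℂ)) * A i) = 1 from h1,
        Matrix.one_mul, Matrix.trace_diagonal]
      norm_cast
    have hre : (∑ a : Fin m, (q a : ℂ) *
        (cpMap A (Matrix.diagonal fun j => (p j : ℂ))) a a) = 1 := by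
      rw [← key, Matrix.trace]
      refine Finset.sum_congr rfl fun a _ => ?_
      rw [Matrix.diag_apply, Matrix.diagonal_mul]
    have := congrArg Complex.re hre
    rw [Complex.re_sum] at this
    simpa [Complex.re_ofReal_mul] using this
end
end

section
/- Let A be an m×n matrix with nonnegative real entries, r ∈ ℝ^m_{≥0} and c ∈ ℝ^n_{≥0}. Then A is approximately (r,c)-scalable if and only if Σ_{i=1}^m r_i = Σ_{j=1}^n c_j and for every zero submatrix L×R of A (i.e., L ⊆ [m], R ⊆ [n] with A_{ij} = 0 for all i ∈ L, j ∈ R), Σ_{i∈L} r_i ≤ Σ_{j∉R} c_j. -/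
open BigOperators

open BigOperators MeasureTheory Finset

lemma RS_indicator_integrable (a b k : ℝ) :
    Integrable ((Set.Ico a b).indicator (fun _ => k)) volume := by
  rw [integrable_indicator_iff measurableSet_Ico]
  exact (integrableOn_const_iff enorm_ne_top).2 (Or.inr (by rw [Real.volume_Ico]; exact ENNReal.ofReal_lt_top))

lemma RS_indicator_integral (a b k : ℝ) (hab : a ≤ b) :
    ∫ t, (Set.Ico a b).indicator (fun _ => k) t = k * (b - a) := by
  rw [integral_indicator_const k measurableSet_Ico, measureReal_def, Real.volume_Ico,
    ENNReal.toReal_ofReal (by linarith), smul_eq_mul]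
  ring

lemma RS_keylin {m n : ℕ} (A : Matrix (Fin m) (Fin n) ℝ)
    (r : Fin m → ℝ) (c : Fin n → ℝ) (hr : ∀ i, 0 ≤ r i) (hc : ∀ j, 0 ≤ c j)
    (hsum : ∑ i, r i = ∑ j, c j)
    (hz : ∀ (L : Finset (Fin m)) (R : Finset (Fin n)),
        (∀ i ∈ L, ∀ j ∈ R, A i j = 0) → ∑ i ∈ L, r i ≤ ∑ j ∈ Rᶜ, c j)
    (u : Fin m → ℝ) (w : Fin n → ℝ)
    (huw : ∀ i j, A i j ≠ 0 → u i ≤ w j) :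
    ∑ i, r i * u i ≤ ∑ j, c j * w j := by
  -- lower bound a
  obtain ⟨a, hau, haw⟩ : ∃ a : ℝ, (∀ i, a ≤ u i) ∧ (∀ j, a ≤ w j) := by
    set S : Finset ℝ := (Finset.image u Finset.univ) ∪ (Finset.image w Finset.univ) with hS
    rcases S.eq_empty_or_nonempty with h | h
    · refine ⟨0, fun i => ?_, fun j => ?_⟩
      · exact absurd (h ▸ (by simp [hS] : u i ∈ S)) (Finset.notMem_empty _)
      · exact absurd (h ▸ (by simp [hS] : w j ∈ S)) (Finset.notMem_empty _)
    · refine ⟨S.min' h, fun i => ?_, fun j => ?_⟩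
      · exact S.min'_le _ (by simp [hS])
      · exact S.min'_le _ (by simp [hS])
  -- threshold inequality
  have hthr : ∀ t : ℝ, ∑ i ∈ Finset.univ.filter (fun i => t < u i), r i
      ≤ ∑ j ∈ Finset.univ.filter (fun j => t < w j), c j := by
    intro t
    have h := hz (Finset.univ.filter (fun i => t < u i)) (Finset.univ.filter (fun j => w j ≤ t)) ?_
    · rw [Finset.compl_filter] at h
      have efil : Finset.filter (fun x => ¬ w x ≤ t) Finset.univ
          = Finset.filter (fun j => t < w j) Finset.univ := by
        apply Finset.filter_congr; intro j _; simp [not_le]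
      rwa [efil] at h
    · intro i hi j hj
      simp only [Finset.mem_filter] at hi hj
      by_contra hne
      exact absurd (huw i j hne) (by linarith [hi.2, hj.2])
  set G : ℝ → ℝ := fun t =>
    (∑ j, (Set.Ico a (w j)).indicator (fun _ => c j) t)
    - (∑ i, (Set.Ico a (u i)).indicator (fun _ => r i) t) with hG
  have hGnn : ∀ t, 0 ≤ G t := by
    intro t
    by_cases ht : a ≤ t
    · have e1 : (∑ j, (Set.Ico a (w j)).indicator (fun _ => c j) t)
          = ∑ j ∈ Finset.univ.filter (fun j => t < w j), c j := by
        rw [Finset.sum_filter]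
        refine Finset.sum_congr rfl fun j _ => ?_
        simp [Set.indicator_apply, Set.mem_Ico, ht]
      have e2 : (∑ i, (Set.Ico a (u i)).indicator (fun _ => r i) t)
          = ∑ i ∈ Finset.univ.filter (fun i => t < u i), r i := by
        rw [Finset.sum_filter]
        refine Finset.sum_congr rfl fun i _ => ?_
        simp [Set.indicator_apply, Set.mem_Ico, ht]
      rw [hG]; dsimp only; rw [e1, e2, sub_nonneg]
      exact hthr t
    · rw [hG]; dsimp only
      rw [Finset.sum_eq_zero (fun j _ => by simp [Set.indicator_apply, Set.mem_Ico, ht]),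
        Finset.sum_eq_zero (fun i _ => by simp [Set.indicator_apply, Set.mem_Ico, ht])]
      simp
  have hint : ∫ t, G t = (∑ j, c j * (w j - a)) - (∑ i, r i * (u i - a)) := by
    rw [hG]
    rw [integral_sub (integrable_finset_sum _ (fun j _ => RS_indicator_integrable a (w j) (c j)))
      (integrable_finset_sum _ (fun i _ => RS_indicator_integrable a (u i) (r i)))]
    rw [integral_finset_sum _ (fun j _ => RS_indicator_integrable a (w j) (c j)),
      integral_finset_sum _ (fun i _ => RS_indicator_integrable a (u i) (r i))]
    congr 1
    · exact Finset.sum_congr rfl fun j _ => RS_indicator_integral a (w j) (c j) (haw j)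
    · exact Finset.sum_congr rfl fun i _ => RS_indicator_integral a (u i) (r i) (hau i)
  have h0 : (0:ℝ) ≤ (∑ j, c j * (w j - a)) - (∑ i, r i * (u i - a)) := by
    rw [← hint]; exact integral_nonneg hGnn
  have e3 : ∑ j, c j * (w j - a) = (∑ j, c j * w j) - (∑ j, c j) * a := by
    simp [mul_sub, Finset.sum_sub_distrib, Finset.sum_mul]
  have e4 : ∑ i, r i * (u i - a) = (∑ i, r i * u i) - (∑ i, r i) * a := by
    simp [mul_sub, Finset.sum_sub_distrib, Finset.sum_mul]
  rw [e3, e4] at h0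
  rw [hsum] at *
  linarith
open BigOperators Finset

lemma RS_exp_lin_bound (a T : ℝ) (ha : 0 < a) (hT : 0 ≤ T) :
    ∃ C : ℝ, ∀ z : ℝ, C ≤ a * Real.exp z - T * z := by
  rcases eq_or_lt_of_le hT with h | h
  · exact ⟨0, fun z => by
      have := Real.exp_pos z
      rw [← h]; nlinarith⟩
  · refine ⟨T - T * Real.log (T / a), fun z => ?_⟩
    have key : a * Real.exp z = T * Real.exp (z - Real.log (T / a)) := by
      rw [Real.exp_sub, Real.exp_log (div_pos h ha)]
      field_simp
    have h2 := Real.add_one_le_exp (z - Real.log (T / a))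
    nlinarith

lemma RS_bddbelow {m n : ℕ} (A : Matrix (Fin m) (Fin n) ℝ) (hA : ∀ i j, 0 ≤ A i j)
    (r : Fin m → ℝ) (c : Fin n → ℝ)
    (hlin : ∀ (u : Fin m → ℝ) (w : Fin n → ℝ),
      (∀ i j, A i j ≠ 0 → u i ≤ w j) → ∑ i, r i * u i ≤ ∑ j, c j * w j)
    (hrnn : 0 ≤ ∑ i, r i)
    (hSne : ∃ i j, A i j ≠ 0) :
    ∃ C : ℝ, ∀ (x : Fin m → ℝ) (y : Fin n → ℝ),
      C ≤ (∑ i, ∑ j, A i j * Real.exp (x i + y j)) - (∑ i, r i * x i) - (∑ j, c j * y j) := by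
  classical
  set S : Finset (Fin m × Fin n) := Finset.univ.filter (fun p => A p.1 p.2 ≠ 0) with hSdef
  have hSne' : S.Nonempty := by
    obtain ⟨i, j, hij⟩ := hSne
    exact ⟨(i, j), by simp [hSdef, hij]⟩
  obtain ⟨p0, hp0S, hp0min⟩ := S.exists_min_image (fun p => A p.1 p.2) hSne'
  have ha : 0 < A p0.1 p0.2 := by
    have : A p0.1 p0.2 ≠ 0 := by simpa [hSdef] using hp0S
    exact lt_of_le_of_ne (hA _ _) (Ne.symm this)
  obtain ⟨C, hC⟩ := RS_exp_lin_bound (A p0.1 p0.2) (∑ i, r i) ha hrnn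
  refine ⟨C, fun x y => ?_⟩
  obtain ⟨pM, hpMS, hpMmax⟩ := S.exists_max_image (fun p => x p.1 + y p.2) hSne'
  set M : ℝ := x pM.1 + y pM.2 with hMdef
  -- linear bound
  have hlin1 : ∑ i, r i * (x i - M) ≤ ∑ j, c j * (- y j) := by
    refine hlin _ _ fun i j hij => ?_
    have hmem : (i, j) ∈ S := by simp [hSdef, hij]
    have := hpMmax (i, j) hmem
    simp only at this
    rw [hMdef]; linarith
  have hlin2 : (∑ i, r i * x i) + (∑ j, c j * y j) ≤ (∑ i, r i) * M := by
    have e1 : ∑ i, r i * (x i - M) = (∑ i, r i * x i) - (∑ i, r i) * M := by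
      simp [mul_sub, Finset.sum_sub_distrib, Finset.sum_mul]
    have e2 : ∑ j, c j * (- y j) = - ∑ j, c j * y j := by
      simp [mul_comm, Finset.sum_neg_distrib]
    rw [e1, e2] at hlin1
    linarith
  -- exponential bound
  have hexp : A p0.1 p0.2 * Real.exp M ≤ ∑ i, ∑ j, A i j * Real.exp (x i + y j) := by
    have esum : ∑ i, ∑ j, A i j * Real.exp (x i + y j)
        = ∑ p : Fin m × Fin n, A p.1 p.2 * Real.exp (x p.1 + y p.2) :=
      (Fintype.sum_prod_type (f := fun p : Fin m × Fin n => A p.1 p.2 * Real.exp (x p.1 + y p.2))).symm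
    rw [esum]
    have h1 : A pM.1 pM.2 * Real.exp (x pM.1 + y pM.2)
        ≤ ∑ p : Fin m × Fin n, A p.1 p.2 * Real.exp (x p.1 + y p.2) :=
      Finset.single_le_sum (f := fun p : Fin m × Fin n => A p.1 p.2 * Real.exp (x p.1 + y p.2))
        (fun p _ => mul_nonneg (hA _ _) (Real.exp_pos _).le) (Finset.mem_univ pM)
    have h2 : A p0.1 p0.2 ≤ A pM.1 pM.2 := hp0min pM hpMS
    have h3 := (Real.exp_pos M).le
    rw [hMdef]
    nlinarith
  have := hC M
  nlinarith [hexp, hlin2, hC M]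
open BigOperators Finset

lemma RS_global_min {m n : ℕ} (f : ((Fin m → ℝ) × (Fin n → ℝ)) → ℝ) (hf : Continuous f)
    (C : ℝ) (hC : ∀ p, C ≤ f p) (δ : ℝ) (hδ : 0 < δ) :
    ∃ p : (Fin m → ℝ) × (Fin n → ℝ), ∀ q,
      f p + δ * ((∑ i, (p.1 i)^2) + ∑ j, (p.2 j)^2)
      ≤ f q + δ * ((∑ i, (q.1 i)^2) + ∑ j, (q.2 j)^2) := by
  classical
  set F : ((Fin m → ℝ) × (Fin n → ℝ)) → ℝ :=
    fun p => f p + δ * ((∑ i, (p.1 i)^2) + ∑ j, (p.2 j)^2) with hF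
  have hD : 0 ≤ f 0 - C := by linarith [hC 0]
  set D : ℝ := f 0 - C with hDdef
  set B : ℝ := Real.sqrt ((D + 1) / δ) with hB
  have hB2 : B ^ 2 = (D + 1) / δ := Real.sq_sqrt (by positivity)
  have hBnn : 0 ≤ B := Real.sqrt_nonneg _
  set K : Set ((Fin m → ℝ) × (Fin n → ℝ)) :=
    (Set.univ.pi fun _ : Fin m => Set.Icc (-B) B) ×ˢ (Set.univ.pi fun _ : Fin n => Set.Icc (-B) B)
    with hK
  have hKc : IsCompact K :=
    (isCompact_univ_pi fun _ => isCompact_Icc).prod (isCompact_univ_pi fun _ => isCompact_Icc)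
  have h0K : (0 : (Fin m → ℝ) × (Fin n → ℝ)) ∈ K := by
    constructor <;>
    · intro i _
      simp only [Prod.fst_zero, Prod.snd_zero, Pi.zero_apply, Set.mem_Icc]
      constructor <;> linarith
  have hFcont : Continuous F := by
    apply hf.add
    apply continuous_const.mul
    apply Continuous.add <;>
    · apply continuous_finset_sum
      intro i _
      fun_prop
  obtain ⟨p, hpK, hpmin⟩ := hKc.exists_isMinOn ⟨0, h0K⟩ hFcont.continuousOn
  refine ⟨p, fun q => ?_⟩
  by_cases hq : q ∈ K
  · exact hpmin hq
  · -- outside K : some coordinate is big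
    have hFq : f 0 + 1 ≤ F q := by
      have hbig : (D + 1) / δ ≤ (∑ i, (q.1 i)^2) + ∑ j, (q.2 j)^2 := by
        rw [hK, Set.mem_prod] at hq
        push_neg at hq
        have hcases : (∃ i, ¬ q.1 i ∈ Set.Icc (-B) B) ∨ (∃ j, ¬ q.2 j ∈ Set.Icc (-B) B) := by
          by_cases h1 : q.1 ∈ Set.univ.pi fun _ : Fin m => Set.Icc (-B) B
          · right
            have := hq h1
            rw [Set.mem_univ_pi] at this
            push_neg at this
            exact this
          · left
            rw [Set.mem_univ_pi] at h1
            push_neg at h1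
            exact h1
        have hs1 : 0 ≤ ∑ i, (q.1 i)^2 := Finset.sum_nonneg fun _ _ => sq_nonneg _
        have hs2 : 0 ≤ ∑ j, (q.2 j)^2 := Finset.sum_nonneg fun _ _ => sq_nonneg _
        rcases hcases with ⟨i, hi⟩ | ⟨j, hj⟩
        · have : B ^ 2 ≤ (q.1 i)^2 := by
            rw [Set.mem_Icc] at hi
            push_neg at hi
            rcases le_or_gt (-B) (q.1 i) with h | h
            · nlinarith [hi h]
            · nlinarith
          have h2 : (q.1 i)^2 ≤ ∑ i, (q.1 i)^2 :=
            Finset.single_le_sum (f := fun i => (q.1 i)^2) (fun _ _ => sq_nonneg _) (Finset.mem_univ i)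
          rw [← hB2]; linarith
        · have : B ^ 2 ≤ (q.2 j)^2 := by
            rw [Set.mem_Icc] at hj
            push_neg at hj
            rcases le_or_gt (-B) (q.2 j) with h | h
            · nlinarith [hj h]
            · nlinarith
          have h2 : (q.2 j)^2 ≤ ∑ j, (q.2 j)^2 :=
            Finset.single_le_sum (f := fun j => (q.2 j)^2) (fun _ _ => sq_nonneg _) (Finset.mem_univ j)
          rw [← hB2]; linarith
      have : C + δ * ((D + 1) / δ) ≤ F q := by
        have := hC q
        have hmul : δ * ((D + 1) / δ) ≤ δ * ((∑ i, (q.1 i)^2) + ∑ j, (q.2 j)^2) :=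
          mul_le_mul_of_nonneg_left hbig hδ.le
        rw [hF]; dsimp only; linarith
      rw [mul_div_cancel₀ _ (ne_of_gt hδ)] at this
      rw [hDdef] at this; linarith
    have hF0 : F 0 = f 0 := by
      rw [hF]; dsimp only; simp
    have h5 : F p ≤ F 0 := hpmin h0K
    rw [hF0] at h5
    show F p ≤ F q
    linarith
open BigOperators Finset

lemma RS_deriv_row {m n : ℕ} (A : Matrix (Fin m) (Fin n) ℝ)
    (r : Fin m → ℝ) (c : Fin n → ℝ) (δ : ℝ)
    (xs : Fin m → ℝ) (ys : Fin n → ℝ)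
    (hmin : ∀ q : (Fin m → ℝ) × (Fin n → ℝ),
      ((∑ i, ∑ j, A i j * Real.exp (xs i + ys j)) - (∑ i, r i * xs i) - (∑ j, c j * ys j))
        + δ * ((∑ i, (xs i)^2) + ∑ j, (ys j)^2)
      ≤ ((∑ i, ∑ j, A i j * Real.exp (q.1 i + q.2 j)) - (∑ i, r i * q.1 i) - (∑ j, c j * q.2 j))
        + δ * ((∑ i, (q.1 i)^2) + ∑ j, (q.2 j)^2))
    (i0 : Fin m) :
    (∑ j, A i0 j * Real.exp (xs i0 + ys j)) - r i0 + δ * (2 * xs i0) = 0 := by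
  classical
  set φ : ℝ → ℝ := fun t =>
    ((∑ i, ∑ j, A i j * Real.exp (Function.update xs i0 t i + ys j))
      - (∑ i, r i * Function.update xs i0 t i) - (∑ j, c j * ys j))
    + δ * ((∑ i, (Function.update xs i0 t i)^2) + ∑ j, (ys j)^2) with hφ
  have hupd : Function.update xs i0 (xs i0) = xs := Function.update_eq_self i0 xs
  have hlocal : IsLocalMin φ (xs i0) := by
    apply Filter.Eventually.of_forall
    intro t
    have h := hmin (Function.update xs i0 t, ys)
    simp only [hφ, hupd]
    exact h
  have h1 : HasDerivAt (fun t => ∑ i, ∑ j, A i j * Real.exp (Function.update xs i0 t i + ys j))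
      (∑ i, if i = i0 then (∑ j, A i0 j * Real.exp (xs i0 + ys j)) else 0) (xs i0) := by
    apply HasDerivAt.fun_sum
    intro i _
    by_cases h : i = i0
    · subst h
      simp only [if_pos rfl, Function.update_self]
      apply HasDerivAt.fun_sum
      intro j _
      simpa using ((hasDerivAt_id (xs i)).add_const (ys j)).exp.const_mul (A i j)
    · simp only [Function.update_of_ne h, if_neg h]
      exact hasDerivAt_const _ _
  have h1' : HasDerivAt (fun t => ∑ i, ∑ j, A i j * Real.exp (Function.update xs i0 t i + ys j))
      (∑ j, A i0 j * Real.exp (xs i0 + ys j)) (xs i0) := by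
    have e : (∑ i, if i = i0 then (∑ j, A i0 j * Real.exp (xs i0 + ys j)) else 0)
        = ∑ j, A i0 j * Real.exp (xs i0 + ys j) := by simp
    rwa [e] at h1
  have h2 : HasDerivAt (fun t => ∑ i, r i * Function.update xs i0 t i) (r i0) (xs i0) := by
    have h2' : HasDerivAt (fun t => ∑ i, r i * Function.update xs i0 t i)
        (∑ i, if i = i0 then r i0 else 0) (xs i0) := by
      apply HasDerivAt.fun_sum
      intro i _
      by_cases h : i = i0
      · subst h
        simp only [if_pos rfl, Function.update_self]
        simpa using (hasDerivAt_id (xs i)).const_mul (r i)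
      · simp only [Function.update_of_ne h, if_neg h]
        exact hasDerivAt_const _ _
    have e : (∑ i, if i = i0 then r i0 else 0) = r i0 := by simp
    rwa [e] at h2'
  have h3 : HasDerivAt (fun t => ∑ i, (Function.update xs i0 t i)^2) (2 * xs i0) (xs i0) := by
    have h3' : HasDerivAt (fun t => ∑ i, (Function.update xs i0 t i)^2)
        (∑ i, if i = i0 then 2 * xs i0 else 0) (xs i0) := by
      apply HasDerivAt.fun_sum
      intro i _
      by_cases h : i = i0
      · subst h
        simp only [if_pos rfl, Function.update_self]
        simpa using hasDerivAt_pow 2 (xs i)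
      · simp only [Function.update_of_ne h, if_neg h]
        exact hasDerivAt_const _ _
    have e : (∑ i, if i = i0 then 2 * xs i0 else 0) = 2 * xs i0 := by simp
    rwa [e] at h3'
  have hd : HasDerivAt φ
      ((∑ j, A i0 j * Real.exp (xs i0 + ys j)) - r i0 + δ * (2 * xs i0)) (xs i0) :=
    ((h1'.sub h2).sub_const (∑ j, c j * ys j)).add
      ((h3.add_const (∑ j, (ys j)^2)).const_mul δ)
  exact hlocal.hasDerivAt_eq_zero hd

/-- Theorem (Rothblum–Schneider): a nonnegative matrix `A` is approximately `(r,c)`-scalable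
iff `Σ r = Σ c` and for every zero submatrix `L × R` of `A`, `Σ_{i∈L} r_i ≤ Σ_{j∉R} c_j`. -/
theorem stmt16 {m n : ℕ} (A : Matrix (Fin m) (Fin n) ℝ) (hA : ∀ i j, 0 ≤ A i j)
    (r : Fin m → ℝ) (c : Fin n → ℝ) (hr : ∀ i, 0 ≤ r i) (hc : ∀ j, 0 ≤ c j) :
    (∀ ε : ℝ, 0 < ε → ∃ (x : Fin m → ℝ) (y : Fin n → ℝ),
      (∀ i, 0 < x i) ∧ (∀ j, 0 < y j) ∧
      Real.sqrt (∑ i, (x i * (∑ j, A i j * y j) - r i) ^ 2) ≤ ε ∧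
      Real.sqrt (∑ j, (y j * (∑ i, x i * A i j) - c j) ^ 2) ≤ ε)
    ↔
    ((∑ i, r i = ∑ j, c j) ∧
      ∀ (L : Finset (Fin m)) (R : Finset (Fin n)),
        (∀ i ∈ L, ∀ j ∈ R, A i j = 0) → ∑ i ∈ L, r i ≤ ∑ j ∈ Rᶜ, c j) := by
  classical
  constructor
  · -- forward direction
    intro h
    have hbound : ∀ ε : ℝ, 0 < ε → ∃ (x : Fin m → ℝ) (y : Fin n → ℝ),
        (∀ i, 0 < x i) ∧ (∀ j, 0 < y j) ∧
        (∀ i, |x i * (∑ j, A i j * y j) - r i| ≤ ε) ∧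
        (∀ j, |y j * (∑ i, x i * A i j) - c j| ≤ ε) := by
      intro ε hε
      obtain ⟨x, y, hx, hy, h1, h2⟩ := h ε hε
      refine ⟨x, y, hx, hy, fun i => ?_, fun j => ?_⟩
      · calc |x i * (∑ j, A i j * y j) - r i|
            = Real.sqrt ((x i * (∑ j, A i j * y j) - r i) ^ 2) := (Real.sqrt_sq_eq_abs _).symm
          _ ≤ Real.sqrt (∑ i, (x i * (∑ j, A i j * y j) - r i) ^ 2) :=
              Real.sqrt_le_sqrt (Finset.single_le_sum
                (f := fun i => (x i * (∑ j, A i j * y j) - r i) ^ 2)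
                (fun _ _ => sq_nonneg _) (Finset.mem_univ i))
          _ ≤ ε := h1
      · calc |y j * (∑ i, x i * A i j) - c j|
            = Real.sqrt ((y j * (∑ i, x i * A i j) - c j) ^ 2) := (Real.sqrt_sq_eq_abs _).symm
          _ ≤ Real.sqrt (∑ j, (y j * (∑ i, x i * A i j) - c j) ^ 2) :=
              Real.sqrt_le_sqrt (Finset.single_le_sum
                (f := fun j => (y j * (∑ i, x i * A i j) - c j) ^ 2)
                (fun _ _ => sq_nonneg _) (Finset.mem_univ j))
          _ ≤ ε := h2
    constructor
    · -- equal sums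
      have habs : ∀ ε : ℝ, 0 < ε → |(∑ i, r i) - ∑ j, c j| ≤ ((m : ℝ) + n) * ε := by
        intro ε hε
        obtain ⟨x, y, hx, hy, h1, h2⟩ := hbound ε hε
        have hswap : ∑ i, x i * (∑ j, A i j * y j) = ∑ j, y j * (∑ i, x i * A i j) := by
          calc ∑ i, x i * (∑ j, A i j * y j)
              = ∑ i, ∑ j, x i * (A i j * y j) := by
                exact Finset.sum_congr rfl fun i _ => Finset.mul_sum _ _ _
            _ = ∑ j, ∑ i, x i * (A i j * y j) := Finset.sum_comm
            _ = ∑ j, y j * (∑ i, x i * A i j) := Finset.sum_congr rfl fun j _ => by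
                rw [Finset.mul_sum]
                exact Finset.sum_congr rfl fun i _ => by ring
        have e1 : (∑ i, r i)
            = (∑ i, x i * (∑ j, A i j * y j)) - ∑ i, (x i * (∑ j, A i j * y j) - r i) := by
          rw [Finset.sum_sub_distrib]; ring
        have e2 : (∑ j, c j)
            = (∑ j, y j * (∑ i, x i * A i j)) - ∑ j, (y j * (∑ i, x i * A i j) - c j) := by
          rw [Finset.sum_sub_distrib]; ring
        have hd : |∑ i, (x i * (∑ j, A i j * y j) - r i)| ≤ (m : ℝ) * ε := by
          calc |∑ i, (x i * (∑ j, A i j * y j) - r i)|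
              ≤ ∑ i, |x i * (∑ j, A i j * y j) - r i| := Finset.abs_sum_le_sum_abs _ _
            _ ≤ ∑ _i : Fin m, ε := Finset.sum_le_sum fun i _ => h1 i
            _ = (m : ℝ) * ε := by simp [mul_comm]
        have he : |∑ j, (y j * (∑ i, x i * A i j) - c j)| ≤ (n : ℝ) * ε := by
          calc |∑ j, (y j * (∑ i, x i * A i j) - c j)|
              ≤ ∑ j, |y j * (∑ i, x i * A i j) - c j| := Finset.abs_sum_le_sum_abs _ _
            _ ≤ ∑ _j : Fin n, ε := Finset.sum_le_sum fun j _ => h2 j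
            _ = (n : ℝ) * ε := by simp [mul_comm]
        have k1 := abs_le.1 hd
        have k2 := abs_le.1 he
        rw [e1, e2, hswap, abs_le]
        constructor <;> [nlinarith; nlinarith]
      by_contra hne
      set η : ℝ := |(∑ i, r i) - ∑ j, c j| with hη
      have hηpos : 0 < η := abs_pos.2 (sub_ne_zero.2 hne)
      set K : ℝ := (m : ℝ) + n with hK
      have hKnn : 0 ≤ K := by positivity
      have h1 := habs (η / (K + 1)) (by positivity)
      have h2 : K * (η / (K + 1)) < η := by
        rw [← mul_div_assoc, div_lt_iff₀ (by positivity)]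
        nlinarith
      linarith
    · -- zero submatrix inequality
      intro L R hLR
      have hineq : ∀ ε : ℝ, 0 < ε →
          ∑ i ∈ L, r i ≤ (∑ j ∈ Rᶜ, c j) + ((m : ℝ) + n) * ε := by
        intro ε hε
        obtain ⟨x, y, hx, hy, h1, h2⟩ := hbound ε hε
        have step1 : ∑ i ∈ L, r i ≤ (∑ i ∈ L, x i * (∑ j, A i j * y j)) + (m : ℝ) * ε := by
          have e1 : ∑ i ∈ L, r i
              = (∑ i ∈ L, x i * (∑ j, A i j * y j))
                - ∑ i ∈ L, (x i * (∑ j, A i j * y j) - r i) := by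
            rw [Finset.sum_sub_distrib]; ring
          have hd : |∑ i ∈ L, (x i * (∑ j, A i j * y j) - r i)| ≤ (m : ℝ) * ε := by
            calc |∑ i ∈ L, (x i * (∑ j, A i j * y j) - r i)|
                ≤ ∑ i ∈ L, |x i * (∑ j, A i j * y j) - r i| := Finset.abs_sum_le_sum_abs _ _
              _ ≤ ∑ _i ∈ L, ε := Finset.sum_le_sum fun i _ => h1 i
              _ = (L.card : ℝ) * ε := by simp [mul_comm]
              _ ≤ (m : ℝ) * ε := by
                  have : (L.card : ℝ) ≤ (m : ℝ) := by
                    exact_mod_cast (Finset.card_le_univ L).trans_eq (by simp)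
                  nlinarith
          have := abs_le.1 hd
          linarith [e1, this.1]
        have step2 : (∑ i ∈ L, x i * (∑ j, A i j * y j))
            ≤ ∑ j ∈ Rᶜ, y j * (∑ i, x i * A i j) := by
          calc ∑ i ∈ L, x i * (∑ j, A i j * y j)
              = ∑ i ∈ L, ∑ j ∈ Rᶜ, x i * (A i j * y j) := by
                refine Finset.sum_congr rfl fun i hi => ?_
                rw [Finset.mul_sum]
                exact (Finset.sum_subset (Finset.subset_univ Rᶜ) fun j _ hj => by
                  rw [hLR i hi j (by simpa using hj)]; ring).symm
            _ ≤ ∑ i, ∑ j ∈ Rᶜ, x i * (A i j * y j) :=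
                Finset.sum_le_sum_of_subset_of_nonneg (Finset.subset_univ L)
                  (fun i _ _ => Finset.sum_nonneg fun j _ =>
                    mul_nonneg (hx i).le (mul_nonneg (hA i j) (hy j).le))
            _ = ∑ j ∈ Rᶜ, ∑ i, x i * (A i j * y j) := Finset.sum_comm
            _ = ∑ j ∈ Rᶜ, y j * (∑ i, x i * A i j) := Finset.sum_congr rfl fun j _ => by
                rw [Finset.mul_sum]
                exact Finset.sum_congr rfl fun i _ => by ring
        have step3 : (∑ j ∈ Rᶜ, y j * (∑ i, x i * A i j))
            ≤ (∑ j ∈ Rᶜ, c j) + (n : ℝ) * ε := by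
          have e2 : ∑ j ∈ Rᶜ, y j * (∑ i, x i * A i j)
              = (∑ j ∈ Rᶜ, c j) + ∑ j ∈ Rᶜ, (y j * (∑ i, x i * A i j) - c j) := by
            rw [Finset.sum_sub_distrib]; ring
          have he : |∑ j ∈ Rᶜ, (y j * (∑ i, x i * A i j) - c j)| ≤ (n : ℝ) * ε := by
            calc |∑ j ∈ Rᶜ, (y j * (∑ i, x i * A i j) - c j)|
                ≤ ∑ j ∈ Rᶜ, |y j * (∑ i, x i * A i j) - c j| := Finset.abs_sum_le_sum_abs _ _
              _ ≤ ∑ _j ∈ Rᶜ, ε := Finset.sum_le_sum fun j _ => h2 j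
              _ = ((Rᶜ).card : ℝ) * ε := by simp [mul_comm]
              _ ≤ (n : ℝ) * ε := by
                  have : ((Rᶜ).card : ℝ) ≤ (n : ℝ) := by
                    exact_mod_cast (Finset.card_le_univ Rᶜ).trans_eq (by simp)
                  nlinarith
          have := abs_le.1 he
          linarith [e2, this.2]
        linarith
      refine le_of_forall_pos_le_add fun ε hε => ?_
      set K : ℝ := (m : ℝ) + n with hK
      have hKnn : 0 ≤ K := by positivity
      have h1 := hineq (ε / (K + 1)) (by positivity)
      have h2 : K * (ε / (K + 1)) ≤ ε := by
        rw [← mul_div_assoc, div_le_iff₀ (by positivity)]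
        nlinarith
      linarith
  · -- backward direction
    rintro ⟨hsum, hz⟩ ε hε
    by_cases hker : ∃ i j, A i j ≠ 0
    · -- main case
      obtain ⟨C, hC⟩ := RS_bddbelow A hA r c
        (fun u w huw => RS_keylin A r c hr hc hsum hz u w huw)
        (Finset.sum_nonneg fun i _ => hr i) hker
      set f : ((Fin m → ℝ) × (Fin n → ℝ)) → ℝ := fun p =>
        (∑ i, ∑ j, A i j * Real.exp (p.1 i + p.2 j))
          - (∑ i, r i * p.1 i) - (∑ j, c j * p.2 j) with hfdef
      have hfc : Continuous f := by
        apply Continuous.sub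
        apply Continuous.sub
        · apply continuous_finset_sum
          intro i _
          apply continuous_finset_sum
          intro j _
          fun_prop
        · apply continuous_finset_sum
          intro i _
          fun_prop
        · apply continuous_finset_sum
          intro j _
          fun_prop
      have hCf : ∀ p, C ≤ f p := fun p => hC p.1 p.2
      have hD : 0 ≤ f 0 - C := by linarith [hCf 0]
      set D : ℝ := f 0 - C with hDdef
      set δ : ℝ := ε ^ 2 / (4 * (D + 1)) with hδdef
      have hδpos : 0 < δ := by positivity
      obtain ⟨p, hp⟩ := RS_global_min f hfc C hCf δ hδpos
      have hminE : ∀ q : (Fin m → ℝ) × (Fin n → ℝ),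
          ((∑ i, ∑ j, A i j * Real.exp (p.1 i + p.2 j)) - (∑ i, r i * p.1 i)
            - (∑ j, c j * p.2 j)) + δ * ((∑ i, (p.1 i)^2) + ∑ j, (p.2 j)^2)
          ≤ ((∑ i, ∑ j, A i j * Real.exp (q.1 i + q.2 j)) - (∑ i, r i * q.1 i)
            - (∑ j, c j * q.2 j)) + δ * ((∑ i, (q.1 i)^2) + ∑ j, (q.2 j)^2) := by
        intro q
        have := hp q
        simpa only [hfdef] using this
      have hrow := RS_deriv_row A r c δ p.1 p.2 hminE
      have etr : ∀ (xv : Fin m → ℝ) (yv : Fin n → ℝ),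
          (∑ j, ∑ i, A.transpose j i * Real.exp (yv j + xv i))
          = ∑ i, ∑ j, A i j * Real.exp (xv i + yv j) := by
        intro xv yv
        rw [Finset.sum_comm]
        exact Finset.sum_congr rfl fun i _ => Finset.sum_congr rfl fun j _ => by
          rw [Matrix.transpose_apply, add_comm]
      have hminT : ∀ q : (Fin n → ℝ) × (Fin m → ℝ),
          ((∑ j, ∑ i, A.transpose j i * Real.exp (p.2 j + p.1 i)) - (∑ j, c j * p.2 j)
            - (∑ i, r i * p.1 i)) + δ * ((∑ j, (p.2 j)^2) + ∑ i, (p.1 i)^2)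
          ≤ ((∑ j, ∑ i, A.transpose j i * Real.exp (q.1 j + q.2 i)) - (∑ j, c j * q.1 j)
            - (∑ i, r i * q.2 i)) + δ * ((∑ j, (q.1 j)^2) + ∑ i, (q.2 i)^2) := by
        intro q
        have h := hminE (q.2, q.1)
        rw [etr p.1 p.2, etr q.2 q.1]
        dsimp only at h ⊢
        linarith
      have hcol := RS_deriv_row A.transpose c r δ p.2 p.1 hminT
      refine ⟨fun i => Real.exp (p.1 i), fun j => Real.exp (p.2 j),
        fun i => Real.exp_pos _, fun j => Real.exp_pos _, ?_, ?_⟩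
      · -- rows
        have hdev : ∀ i, Real.exp (p.1 i) * (∑ j, A i j * Real.exp (p.2 j)) - r i
            = - (δ * (2 * p.1 i)) := by
          intro i
          have h := hrow i
          have e : Real.exp (p.1 i) * (∑ j, A i j * Real.exp (p.2 j))
              = ∑ j, A i j * Real.exp (p.1 i + p.2 j) := by
            rw [Finset.mul_sum]
            exact Finset.sum_congr rfl fun j _ => by rw [Real.exp_add]; ring
          rw [e]; linarith
        have hQ : δ * ((∑ i, (p.1 i)^2) + ∑ j, (p.2 j)^2) ≤ D := by
          have h := hp 0
          have e0 : ((∑ i, ((0 : (Fin m → ℝ) × (Fin n → ℝ)).1 i)^2)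
              + ∑ j, ((0 : (Fin m → ℝ) × (Fin n → ℝ)).2 j)^2) = 0 := by simp
          rw [e0, mul_zero] at h
          have := hCf p
          rw [hDdef]
          linarith
        have hsq : ∑ i, (Real.exp (p.1 i) * (∑ j, A i j * Real.exp (p.2 j)) - r i) ^ 2
            ≤ ε ^ 2 := by
          have e1 : ∑ i, (Real.exp (p.1 i) * (∑ j, A i j * Real.exp (p.2 j)) - r i) ^ 2
              = ∑ i, (4 * δ ^ 2) * (p.1 i) ^ 2 := by
            refine Finset.sum_congr rfl fun i _ => ?_
            rw [hdev i]; ring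
          rw [e1, ← Finset.mul_sum]
          have hX : 0 ≤ ∑ i, (p.1 i) ^ 2 := Finset.sum_nonneg fun _ _ => sq_nonneg _
          have hY : 0 ≤ ∑ j, (p.2 j) ^ 2 := Finset.sum_nonneg fun _ _ => sq_nonneg _
          have hQX : δ * (∑ i, (p.1 i) ^ 2) ≤ D := by nlinarith
          have heps : 4 * δ * (D + 1) = ε ^ 2 := by
            rw [hδdef]; field_simp
          nlinarith
        calc Real.sqrt (∑ i, (Real.exp (p.1 i) * (∑ j, A i j * Real.exp (p.2 j)) - r i) ^ 2)
            ≤ Real.sqrt (ε ^ 2) := Real.sqrt_le_sqrt hsq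
          _ = ε := Real.sqrt_sq hε.le
      · -- columns
        have hdev : ∀ j, Real.exp (p.2 j) * (∑ i, Real.exp (p.1 i) * A i j) - c j
            = - (δ * (2 * p.2 j)) := by
          intro j
          have h := hcol j
          have e : Real.exp (p.2 j) * (∑ i, Real.exp (p.1 i) * A i j)
              = ∑ i, A.transpose j i * Real.exp (p.2 j + p.1 i) := by
            rw [Finset.mul_sum]
            exact Finset.sum_congr rfl fun i _ => by
              rw [Matrix.transpose_apply, Real.exp_add]; ring
          rw [e]; linarith
        have hQ : δ * ((∑ i, (p.1 i)^2) + ∑ j, (p.2 j)^2) ≤ D := by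
          have h := hp 0
          have e0 : ((∑ i, ((0 : (Fin m → ℝ) × (Fin n → ℝ)).1 i)^2)
              + ∑ j, ((0 : (Fin m → ℝ) × (Fin n → ℝ)).2 j)^2) = 0 := by simp
          rw [e0, mul_zero] at h
          have := hCf p
          rw [hDdef]
          linarith
        have hsq : ∑ j, (Real.exp (p.2 j) * (∑ i, Real.exp (p.1 i) * A i j) - c j) ^ 2
            ≤ ε ^ 2 := by
          have e1 : ∑ j, (Real.exp (p.2 j) * (∑ i, Real.exp (p.1 i) * A i j) - c j) ^ 2
              = ∑ j, (4 * δ ^ 2) * (p.2 j) ^ 2 := by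
            refine Finset.sum_congr rfl fun j _ => ?_
            rw [hdev j]; ring
          rw [e1, ← Finset.mul_sum]
          have hX : 0 ≤ ∑ i, (p.1 i) ^ 2 := Finset.sum_nonneg fun _ _ => sq_nonneg _
          have hY : 0 ≤ ∑ j, (p.2 j) ^ 2 := Finset.sum_nonneg fun _ _ => sq_nonneg _
          have hQY : δ * (∑ j, (p.2 j) ^ 2) ≤ D := by nlinarith
          have heps : 4 * δ * (D + 1) = ε ^ 2 := by
            rw [hδdef]; field_simp
          nlinarith
        calc Real.sqrt (∑ j, (Real.exp (p.2 j) * (∑ i, Real.exp (p.1 i) * A i j) - c j) ^ 2)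
            ≤ Real.sqrt (ε ^ 2) := Real.sqrt_le_sqrt hsq
          _ = ε := Real.sqrt_sq hε.le
    · -- degenerate case : A = 0
      push_neg at hker
      have hr0 : ∀ i, r i = 0 := by
        have h := hz Finset.univ Finset.univ (fun i _ j _ => hker i j)
        rw [Finset.compl_univ, Finset.sum_empty] at h
        intro i
        exact (Finset.sum_eq_zero_iff_of_nonneg (fun i _ => hr i)).1
          (le_antisymm h (Finset.sum_nonneg fun i _ => hr i)) i (Finset.mem_univ i)
      have hc0 : ∀ j, c j = 0 := by
        have hcz : ∑ j, c j = 0 := by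
          rw [← hsum]
          exact Finset.sum_eq_zero fun i _ => hr0 i
        intro j
        exact (Finset.sum_eq_zero_iff_of_nonneg (fun j _ => hc j)).1 hcz j (Finset.mem_univ j)
      refine ⟨fun _ => 1, fun _ => 1, fun _ => one_pos, fun _ => one_pos, ?_, ?_⟩
      · have e : ∑ i, ((1:ℝ) * (∑ j, A i j * 1) - r i) ^ 2 = 0 :=
          Finset.sum_eq_zero fun i _ => by simp [hker, hr0]
        rw [e, Real.sqrt_zero]
        exact hε.le
      · have e : ∑ j, ((1:ℝ) * (∑ i, (1:ℝ) * A i j) - c j) ^ 2 = 0 :=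
          Finset.sum_eq_zero fun j _ => by simp [hker, hc0]
        rw [e, Real.sqrt_zero]
        exact hε.le
end

section
/- Let s, m be positive integers, n = ms, and for each i ∈ [s] let p(i) = (p_1(i) ≥ … ≥ p_m(i) > 0) be a nonincreasing sequence of positive reals; set P = ⊕_{i=1}^s diag(p(i)) ∈ Mat_n(ℂ). Then there exist m×m positive-semidefinite Hermitian matrices H_1, …, H_s with Σ_{i=1}^s H_i = I_m and the eigenvalues of H_i (with multiplicity, in nonincreasing order) equal to p(i) for each i, if and only if for every ε > 0 there exist an invertible g ∈ Mat_m(ℂ) and invertible h_1, …, h_s ∈ Mat_m(ℂ) such that, with h = ⊕_{i=1}^s h_i, ‖g† T_m^s(h h†) g − I_m‖ ≤ ε and ‖h† (T_m^s)*(g g†) h − P‖ ≤ ε. -/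
open Matrix BigOperators
open Filter Topology

noncomputable section

/-- The Kraus operators of `T_m^s : Mat_{ms}(ℂ) → Mat_m(ℂ)`: `A_i = [0 | I_m | 0]`, with
`ℂ^{ms}` identified with `ℂ^s ⊗ ℂ^m` (index type `Fin s × Fin m`). -/
def hornKraus (s m : ℕ) : Fin s → Matrix (Fin m) (Fin s × Fin m) ℂ :=
  fun i => fun a jb => if jb.1 = i ∧ jb.2 = a then 1 else 0

/-- The block-diagonal matrix `⊕_{i=1}^s h_i`. -/
def blockDiag {s m : ℕ} (h : Fin s → Matrix (Fin m) (Fin m) ℂ) :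
    Matrix (Fin s × Fin m) (Fin s × Fin m) ℂ :=
  fun jb jb' => if jb.1 = jb'.1 then h jb.1 jb.2 jb'.2 else 0


-- ===== auxiliary lemmas =====
lemma frob_eq {ι κ : Type*} [Fintype ι] [Fintype κ] (A : Matrix ι κ ℂ) :
    frob A = Real.sqrt (∑ a, ∑ b, Complex.normSq (A a b)) := by
  have h : (A * Aᴴ).trace = ((∑ a, ∑ b, Complex.normSq (A a b) : ℝ) : ℂ) := by
    simp [Matrix.trace, Matrix.diag, Matrix.mul_apply, Matrix.conjTranspose_apply,
      Complex.mul_conj, Complex.ofReal_sum]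
  rw [frob, h, Complex.ofReal_re]

lemma frob_nonneg {ι κ : Type*} [Fintype ι] [Fintype κ] (A : Matrix ι κ ℂ) : 0 ≤ frob A :=
  Real.sqrt_nonneg _

lemma frob_zero {ι κ : Type*} [Fintype ι] [Fintype κ] : frob (0 : Matrix ι κ ℂ) = 0 := by
  simp [frob_eq]

lemma entry_le_frob {ι κ : Type*} [Fintype ι] [Fintype κ] (A : Matrix ι κ ℂ) (a : ι) (b : κ) :
    ‖A a b‖ ≤ frob A := by
  rw [frob_eq, Complex.norm_def]
  apply Real.sqrt_le_sqrt
  calc Complex.normSq (A a b) ≤ ∑ b', Complex.normSq (A a b') :=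
        Finset.single_le_sum (fun _ _ => Complex.normSq_nonneg _) (Finset.mem_univ b)
    _ ≤ _ := Finset.single_le_sum (f := fun a' => ∑ b', Complex.normSq (A a' b'))
        (fun _ _ => Finset.sum_nonneg fun _ _ => Complex.normSq_nonneg _) (Finset.mem_univ a)

lemma bd_apply {s m : ℕ} (h : Fin s → Matrix (Fin m) (Fin m) ℂ)
    (jb jb' : Fin s × Fin m) :
    _root_.blockDiag h jb jb' = if jb.1 = jb'.1 then h jb.1 jb.2 jb'.2 else 0 := rfl

lemma hornKraus_eq (s m : ℕ) (i : Fin s) :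
    hornKraus s m i = Matrix.of fun a jb => if jb = (i, a) then 1 else 0 := by
  ext a jb; simp [hornKraus, Prod.ext_iff]

lemma hornKraus_mul (s m : ℕ) (i : Fin s) (X : Matrix (Fin s × Fin m) (Fin s × Fin m) ℂ) :
    hornKraus s m i * X * (hornKraus s m i)ᴴ =
      Matrix.of fun a b => X (i, a) (i, b) := by
  ext a b
  rw [hornKraus_eq]
  simp only [Matrix.mul_apply, Matrix.conjTranspose_apply, Matrix.of_apply]
  simp [ite_mul, mul_ite, apply_ite star]

lemma cpMap_hornKraus (s m : ℕ) (X : Matrix (Fin s × Fin m) (Fin s × Fin m) ℂ) :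
    cpMap (hornKraus s m) X = Matrix.of fun a b => ∑ i, X (i, a) (i, b) := by
  unfold cpMap
  ext a b
  simp [hornKraus_mul, Matrix.sum_apply]

lemma cpDual_hornKraus (s m : ℕ) (Y : Matrix (Fin m) (Fin m) ℂ) :
    cpDual (hornKraus s m) Y = _root_.blockDiag (fun _ => Y) := by
  unfold cpDual
  ext ⟨j, a⟩ ⟨j', b⟩
  simp only [Matrix.sum_apply, Matrix.mul_apply, Matrix.conjTranspose_apply, hornKraus_eq,
    Matrix.of_apply, bd_apply]
  simp only [ite_mul, mul_ite, apply_ite star, Prod.ext_iff, ite_and, star_one, star_zero,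
    one_mul, zero_mul, mul_one, mul_zero, Finset.sum_ite_eq, Finset.sum_ite_eq',
    Finset.mem_univ, if_true]
  by_cases hjj : j = j'
  · subst hjj; simp
  · simp [hjj, Ne.symm hjj]
lemma bd_mul {s m : ℕ} (h k : Fin s → Matrix (Fin m) (Fin m) ℂ) :
    _root_.blockDiag h * _root_.blockDiag k = _root_.blockDiag (fun i => h i * k i) := by
  ext ⟨j, a⟩ ⟨j', b⟩
  simp only [Matrix.mul_apply, bd_apply, Fintype.sum_prod_type]
  by_cases hjj : j = j'
  · subst hjj
    simp [Matrix.mul_apply, Finset.sum_ite_eq, eq_comm]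
  · simp [hjj]

lemma bd_conjT {s m : ℕ} (h : Fin s → Matrix (Fin m) (Fin m) ℂ) :
    (_root_.blockDiag h)ᴴ = _root_.blockDiag (fun i => (h i)ᴴ) := by
  ext ⟨j, a⟩ ⟨j', b⟩
  simp only [Matrix.conjTranspose_apply, bd_apply]
  by_cases hjj : j = j'
  · subst hjj; simp
  · simp [hjj, Ne.symm hjj]

lemma bd_diag {s m : ℕ} (d : Fin s → Fin m → ℂ) :
    _root_.blockDiag (fun i => Matrix.diagonal (d i)) =
      Matrix.diagonal (fun jb : Fin s × Fin m => d jb.1 jb.2) := by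
  ext ⟨j, a⟩ ⟨j', b⟩
  by_cases hjj : j = j'
  · subst hjj
    by_cases hab : a = b <;>
      simp [bd_apply, Matrix.diagonal_apply, Prod.ext_iff, hab]
  · simp [bd_apply, hjj, Matrix.diagonal_apply, Prod.ext_iff]

lemma bd_one {s m : ℕ} :
    _root_.blockDiag (fun _ : Fin s => (1 : Matrix (Fin m) (Fin m) ℂ)) = 1 := by
  rw [show (1 : Matrix (Fin m) (Fin m) ℂ) = Matrix.diagonal (fun _ => 1) by simp,
    bd_diag]
  rfl

-- L1 : det(z - X Xᴴ) = det(z - Xᴴ X) for invertible X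
lemma det_diag_sub_mul_comm {k : ℕ} (X : Matrix (Fin k) (Fin k) ℂ) (hX : IsUnit X.det)
    (z : ℂ) :
    (Matrix.diagonal (fun _ => z) - X * Xᴴ).det
      = (Matrix.diagonal (fun _ => z) - Xᴴ * X).det := by
  have hXu : IsUnit X := (Matrix.isUnit_iff_isUnit_det X).mpr hX
  rw [← Matrix.smul_one_eq_diagonal]
  have key : X * (z • (1 : Matrix (Fin k) (Fin k) ℂ) - Xᴴ * X) * X⁻¹
      = z • 1 - X * Xᴴ := by
    rw [Matrix.mul_sub, Matrix.sub_mul]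
    congr 1
    · rw [Matrix.mul_smul, Matrix.mul_one, Matrix.smul_mul, Matrix.mul_nonsing_inv _ hX]
    · rw [show X * (Xᴴ * X) = X * Xᴴ * X from by rw [Matrix.mul_assoc], Matrix.mul_assoc,
        Matrix.mul_nonsing_inv _ hX, Matrix.mul_one]
  rw [← key, Matrix.det_conj hXu]

-- L2 : unitary conjugation invariance
lemma det_diag_sub_unitary_conj {k : ℕ} (U B : Matrix (Fin k) (Fin k) ℂ)
    (hU : U ∈ Matrix.unitaryGroup (Fin k) ℂ) (z : ℂ) :
    (Matrix.diagonal (fun _ => z) - U * B * Uᴴ).det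
      = (Matrix.diagonal (fun _ => z) - B).det := by
  have h1 : U * Uᴴ = 1 := by
    have := Matrix.mem_unitaryGroup_iff.mp hU
    rwa [Matrix.star_eq_conjTranspose] at this
  have hUinv : U⁻¹ = Uᴴ := Matrix.inv_eq_right_inv h1
  have hdet : IsUnit U.det :=
    IsUnit.of_mul_eq_one (Uᴴ.det) (by rw [← Matrix.det_mul, h1, Matrix.det_one])
  have hXu : IsUnit U := (Matrix.isUnit_iff_isUnit_det U).mpr hdet
  rw [← Matrix.smul_one_eq_diagonal]
  have key : U * (z • (1 : Matrix (Fin k) (Fin k) ℂ) - B) * U⁻¹ = z • 1 - U * B * Uᴴ := by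
    rw [Matrix.mul_sub, Matrix.sub_mul, hUinv]
    congr 1
    rw [Matrix.mul_smul, Matrix.mul_one, Matrix.smul_mul, h1]
  rw [← key, Matrix.det_conj hXu]

-- L3 : permutation from equal multisets
lemma exists_perm_comp {k : ℕ} (e q : Fin k → ℝ)
    (h : Multiset.map e Finset.univ.val = Multiset.map q Finset.univ.val) :
    ∃ σ : Equiv.Perm (Fin k), q ∘ σ = e := by
  classical
  have hcard : ∀ c : ℝ, Fintype.card {a // e a = c} = Fintype.card {b // q b = c} := by
    intro c
    have hcount := congrArg (Multiset.count c) h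
    rw [Multiset.count_map, Multiset.count_map] at hcount
    rw [Fintype.card_subtype, Fintype.card_subtype]
    have h1 : (Finset.univ.filter fun a => e a = c) = Finset.univ.filter fun a => c = e a :=
      Finset.ext fun x => by simp [eq_comm]
    have h2 : (Finset.univ.filter fun a => q a = c) = Finset.univ.filter fun a => c = q a :=
      Finset.ext fun x => by simp [eq_comm]
    rw [h1, h2]
    simpa [Finset.card, Finset.filter_val] using hcount
  refine ⟨Equiv.ofFiberEquiv (f := e) (g := q) fun c => Fintype.equivOfCardEq (hcard c), ?_⟩
  funext a
  exact Equiv.ofFiberEquiv_map _ a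

-- L4 : diagonal of permuted vector is unitarily conjugate to diagonal
lemma diagonal_perm_conj {k : ℕ} (d : Fin k → ℂ) (σ : Equiv.Perm (Fin k)) :
    ∃ P ∈ Matrix.unitaryGroup (Fin k) ℂ,
      Matrix.diagonal (d ∘ σ) = P * Matrix.diagonal d * Pᴴ := by
  classical
  set P : Matrix (Fin k) (Fin k) ℂ := σ.toPEquiv.toMatrix with hP
  have hPT : Pᴴ = σ.symm.toPEquiv.toMatrix := by
    rw [hP, Equiv.toPEquiv_symm, PEquiv.toMatrix_symm]
    ext a b
    simp only [Matrix.conjTranspose_apply, Matrix.transpose_apply, PEquiv.toMatrix_apply]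
    rcases (σ.toPEquiv b : Option (Fin k)) with _ | x <;> simp [apply_ite star]
  have hunit : P ∈ Matrix.unitaryGroup (Fin k) ℂ := by
    rw [Matrix.mem_unitaryGroup_iff, Matrix.star_eq_conjTranspose, hPT, hP,
      ← PEquiv.toMatrix_trans, ← Equiv.toPEquiv_trans]
    simp
  refine ⟨P, hunit, ?_⟩
  have hstep : P * Matrix.diagonal d * Pᴴ
      = ((Matrix.diagonal d).submatrix σ id).submatrix id σ := by
    rw [hPT, hP, PEquiv.toMatrix_toPEquiv_mul, PEquiv.mul_toMatrix_toPEquiv, Equiv.symm_symm]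
  rw [hstep, Matrix.submatrix_submatrix, Function.comp_id, Function.id_comp,
    Matrix.submatrix_diagonal_equiv]

-- L5 : a Hermitian matrix whose "characteristic function" is ∏ (z - q j) is unitarily
-- conjugate to diagonal q.
lemma hermitian_eig_of_charfun {k : ℕ} (A : Matrix (Fin k) (Fin k) ℂ)
    (hA : A.IsHermitian) (q : Fin k → ℝ)
    (hchar : ∀ z : ℂ, (Matrix.diagonal (fun _ => z) - A).det = ∏ j, (z - (q j : ℂ))) :
    ∃ U ∈ Matrix.unitaryGroup (Fin k) ℂ,
      A = U * Matrix.diagonal (fun j => (q j : ℂ)) * Uᴴ := by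
  classical
  set e : Fin k → ℝ := hA.eigenvalues with he
  have hUe := hA.eigenvectorUnitary.2
  have hspec := hA.spectral_theorem
  rw [Unitary.conjStarAlgAut_apply, Matrix.star_eq_conjTranspose] at hspec
  -- characteristic function of A via eigenvalues
  have hchar2 : ∀ z : ℂ, (Matrix.diagonal (fun _ => z) - A).det = ∏ j, (z - (e j : ℂ)) := by
    intro z
    rw [hspec, det_diag_sub_unitary_conj _ _ hUe z]
    have : Matrix.diagonal (fun _ => z)
        - Matrix.diagonal (RCLike.ofReal ∘ e : Fin k → ℂ)
        = Matrix.diagonal (fun j => z - (e j : ℂ)) := by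
      rw [Matrix.diagonal_sub]
      rfl
    rw [this, Matrix.det_diagonal]
  -- equal polynomials
  have hpoly : (∏ j, (Polynomial.X - Polynomial.C ((e j : ℂ))))
      = ∏ j, (Polynomial.X - Polynomial.C ((q j : ℂ))) := by
    apply Polynomial.funext
    intro z
    have h1 := (hchar2 z).symm.trans (hchar z)
    simpa [Polynomial.eval_prod] using h1
  -- multisets of roots
  have hmult : Multiset.map e Finset.univ.val = Multiset.map q Finset.univ.val := by
    apply Multiset.map_injective (Complex.ofReal_injective)
    have h1 := congrArg Polynomial.roots hpoly
    rw [Finset.prod_eq_multiset_prod, Finset.prod_eq_multiset_prod] at h1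
    have e1 : Multiset.map (fun j => Polynomial.X - Polynomial.C ((e j : ℂ))) Finset.univ.val
        = Multiset.map (fun a => Polynomial.X - Polynomial.C a)
            (Multiset.map (fun j => ((e j : ℝ) : ℂ)) Finset.univ.val) := by
      rw [Multiset.map_map]; rfl
    have e2 : Multiset.map (fun j => Polynomial.X - Polynomial.C ((q j : ℂ))) Finset.univ.val
        = Multiset.map (fun a => Polynomial.X - Polynomial.C a)
            (Multiset.map (fun j => ((q j : ℝ) : ℂ)) Finset.univ.val) := by
      rw [Multiset.map_map]; rfl
    rw [e1, e2, Polynomial.roots_multiset_prod_X_sub_C,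
      Polynomial.roots_multiset_prod_X_sub_C] at h1
    rw [Multiset.map_map, Multiset.map_map]
    exact h1
  obtain ⟨σ, hσ⟩ := exists_perm_comp e q hmult
  obtain ⟨P, hP, hPd⟩ := diagonal_perm_conj (fun j => (q j : ℂ)) σ
  refine ⟨(hA.eigenvectorUnitary : Matrix (Fin k) (Fin k) ℂ) * P,
    Submonoid.mul_mem _ hUe hP, ?_⟩
  have hde : (RCLike.ofReal ∘ e : Fin k → ℂ) = (fun j => (q j : ℂ)) ∘ σ := by
    funext j
    simp only [Function.comp_apply]
    rw [← congrFun hσ j]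
    rfl
  conv_lhs => rw [hspec]
  rw [hde, hPd, Matrix.conjTranspose_mul]
  noncomm_ring



lemma tendsto_det_diag_sub {k : ℕ} (f : ℕ → Matrix (Fin k) (Fin k) ℂ)
    (L : Matrix (Fin k) (Fin k) ℂ)
    (hf : ∀ a b, Filter.Tendsto (fun n => f n a b) Filter.atTop (𝓝 (L a b))) (z : ℂ) :
    Filter.Tendsto (fun n => (Matrix.diagonal (fun _ => z) - f n).det) Filter.atTop
      (𝓝 ((Matrix.diagonal (fun _ => z) - L).det)) := by
  have h0 : Filter.Tendsto (fun n => (fun c : Fin k × Fin k => f n c.1 c.2)) Filter.atTop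
      (𝓝 (fun c : Fin k × Fin k => L c.1 c.2)) :=
    tendsto_pi_nhds.mpr fun c => hf c.1 c.2
  have hF : Continuous (fun w : Fin k × Fin k → ℂ =>
      (Matrix.diagonal (fun _ : Fin k => z) - Matrix.of fun a b => w (a, b)).det) := by
    apply Continuous.matrix_det
    exact continuous_const.sub (continuous_matrix fun a b => continuous_apply _)
  exact (hF.tendsto _).comp h0

set_option maxHeartbeats 1000000 in
lemma approx_limit {s m : ℕ} (p : Fin s → Fin m → ℝ)
    (X : Fin s → ℕ → Matrix (Fin m) (Fin m) ℂ)
    (hXdet : ∀ i k, IsUnit (X i k).det)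
    (E1 : ∀ k (a b : Fin m), ‖(∑ i, X i k * (X i k)ᴴ) a b
      - (1 : Matrix (Fin m) (Fin m) ℂ) a b‖ ≤ 1/((k:ℝ)+1))
    (E2 : ∀ k i (a b : Fin m), ‖((X i k)ᴴ * X i k) a b
      - (Matrix.diagonal fun j => (p i j : ℂ)) a b‖ ≤ 1/((k:ℝ)+1)) :
    ∃ H : Fin s → Matrix (Fin m) (Fin m) ℂ,
      (∀ i, ∃ U ∈ Matrix.unitaryGroup (Fin m) ℂ,
        H i = U * Matrix.diagonal (fun j => (p i j : ℂ)) * Uᴴ) ∧ ∑ i, H i = 1 := by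
  classical
  set M : Fin s → ℕ → Matrix (Fin m) (Fin m) ℂ := fun i k => X i k * (X i k)ᴴ with hM
  set N : Fin s → ℕ → Matrix (Fin m) (Fin m) ℂ := fun i k => (X i k)ᴴ * X i k with hN
  -- boundedness of entries of M
  have hMabs : ∀ k i (a b : Fin m), ‖M i k a b‖ ≤ 2 := by
    intro k i a b
    set r : Fin s → Fin m → ℝ := fun i' c => ∑ j, Complex.normSq (X i' k c j) with hr
    have hdiag : ∀ i' c, M i' k c c = ((r i' c : ℝ) : ℂ) := by
      intro i' c
      rw [hM]
      simp only [Matrix.mul_apply, Matrix.conjTranspose_apply, Complex.star_def,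
        Complex.mul_conj, hr]
      norm_cast
    have hrnn : ∀ i' c, 0 ≤ r i' c :=
      fun i' c => Finset.sum_nonneg fun _ _ => Complex.normSq_nonneg _
    have hrsum : ∀ c, ∑ i', r i' c ≤ 2 := by
      intro c
      have h1 := E1 k c c
      rw [Matrix.sum_apply, Matrix.one_apply_eq] at h1
      have h2 : (∑ i', M i' k c c) = ((∑ i', r i' c : ℝ) : ℂ) := by
        rw [Complex.ofReal_sum]
        exact Finset.sum_congr rfl fun i' _ => hdiag i' c
      rw [h2] at h1
      have h3 : |(∑ i', r i' c) - 1| ≤ 1/((k:ℝ)+1) := by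
        have e : ((∑ i', r i' c : ℝ) : ℂ) - 1 = (((∑ i', r i' c) - 1 : ℝ) : ℂ) := by
          push_cast; ring
        rw [e, Complex.norm_real, Real.norm_eq_abs] at h1
        exact h1
      have h4 : 1/((k:ℝ)+1) ≤ 1 := by
        rw [div_le_one (by positivity)]
        have : (0:ℝ) ≤ (k:ℝ) := Nat.cast_nonneg k
        linarith
      have h5 := abs_le.mp (h3.trans h4)
      linarith [h5.2]
    have hrle : ∀ i' c, r i' c ≤ 2 := fun i' c =>
      le_trans (Finset.single_le_sum (f := fun i'' => r i'' c)
        (fun _ _ => hrnn _ _) (Finset.mem_univ i')) (hrsum c)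
    have hent : ‖M i k a b‖ ≤ (r i a + r i b)/2 := by
      rw [hM]
      simp only [Matrix.mul_apply]
      refine le_trans (norm_sum_le _ _) ?_
      have hterm : ∀ j, ‖X i k a j * (X i k)ᴴ j b‖
          ≤ (Complex.normSq (X i k a j) + Complex.normSq (X i k b j))/2 := by
        intro j
        rw [Matrix.conjTranspose_apply, norm_mul, Complex.star_def, Complex.norm_conj]
        have e1 := Complex.sq_norm (X i k a j)
        have e2 := Complex.sq_norm (X i k b j)
        nlinarith [two_mul_le_add_sq (‖X i k a j‖) (‖X i k b j‖),
          norm_nonneg (X i k a j), norm_nonneg (X i k b j)]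
      refine le_trans (Finset.sum_le_sum fun j _ => hterm j) ?_
      rw [hr]
      rw [← Finset.sum_div, Finset.sum_add_distrib]
    have := hrle i a
    have := hrle i b
    linarith
  -- compactness
  set v : ℕ → ((Fin s × Fin m × Fin m) → ℂ) := fun k c => M c.1 k c.2.1 c.2.2 with hv
  have hball : ∀ k, v k ∈ Metric.closedBall (0 : (Fin s × Fin m × Fin m) → ℂ) 2 := by
    intro k
    rw [Metric.mem_closedBall, dist_zero_right]
    refine (pi_norm_le_iff_of_nonneg (by norm_num)).mpr fun c => ?_
    exact hMabs k c.1 c.2.1 c.2.2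
  obtain ⟨A, -, φ, hφ, hconv⟩ :=
    tendsto_subseq_of_bounded Metric.isBounded_closedBall hball
  have hcoord : ∀ i (a b : Fin m),
      Tendsto (fun k => M i (φ k) a b) atTop (𝓝 (A (i,a,b))) := by
    intro i a b
    exact tendsto_pi_nhds.mp hconv (i,a,b)
  set H : Fin s → Matrix (Fin m) (Fin m) ℂ := fun i => Matrix.of fun a b => A (i,a,b) with hH
  have hbase : Tendsto (fun k : ℕ => 1/((k:ℝ)+1)) atTop (𝓝 0) :=
    tendsto_one_div_add_atTop_nhds_zero_nat
  have hbaseφ : Tendsto (fun k : ℕ => 1/((φ k:ℝ)+1)) atTop (𝓝 0) := by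
    apply squeeze_zero (fun k => by positivity) (fun k => ?_) hbase
    apply one_div_le_one_div_of_le (by positivity)
    have : (k:ℝ) ≤ (φ k : ℝ) := by exact_mod_cast hφ.le_apply
    linarith
  -- sum of H is 1
  have hsum : ∑ i, H i = 1 := by
    ext a b
    have h1 : Tendsto (fun k => ∑ i, M i (φ k) a b) atTop (𝓝 (∑ i, A (i,a,b))) :=
      tendsto_finset_sum _ fun i _ => hcoord i a b
    have h2 : Tendsto (fun k => ∑ i, M i (φ k) a b) atTop
        (𝓝 ((1 : Matrix (Fin m) (Fin m) ℂ) a b)) := by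
      rw [tendsto_iff_dist_tendsto_zero]
      apply squeeze_zero (fun k => dist_nonneg) (fun k => ?_) hbaseφ
      rw [Complex.dist_eq]
      have := E1 (φ k) a b
      rwa [Matrix.sum_apply] at this
    have h3 := tendsto_nhds_unique h1 h2
    rw [Matrix.sum_apply]
    exact h3
  -- H is Hermitian
  have hherm : ∀ i, (H i).IsHermitian := by
    intro i
    have hMh : ∀ k, (M i k)ᴴ = M i k := fun k => by
      rw [hM]
      simp only []
      rw [Matrix.conjTranspose_mul, Matrix.conjTranspose_conjTranspose]
    ext a b
    have h1 : Tendsto (fun k => star (M i (φ k) b a)) atTop (𝓝 (star (A (i,b,a)))) :=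
      ((continuous_star.tendsto _).comp (hcoord i b a))
    have heq : (fun k => star (M i (φ k) b a)) = fun k => M i (φ k) a b := by
      funext k
      have h := hMh (φ k)
      calc star (M i (φ k) b a) = (M i (φ k))ᴴ a b := rfl
        _ = M i (φ k) a b := by rw [h]
    rw [heq] at h1
    exact tendsto_nhds_unique h1 (hcoord i a b)
  -- characteristic function of H i
  have hchar : ∀ i (z : ℂ),
      (Matrix.diagonal (fun _ => z) - H i).det = ∏ j, (z - (p i j : ℂ)) := by
    intro i z
    have h1 : Filter.Tendsto (fun k => (Matrix.diagonal (fun _ : Fin m => z) - M i (φ k)).det)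
        atTop (𝓝 ((Matrix.diagonal (fun _ : Fin m => z) - H i).det)) :=
      tendsto_det_diag_sub _ _ (fun a b => hcoord i a b) z
    have h2 : Filter.Tendsto (fun k => (Matrix.diagonal (fun _ : Fin m => z) - N i (φ k)).det)
        atTop (𝓝 ((Matrix.diagonal (fun _ : Fin m => z)
          - Matrix.diagonal fun j => (p i j : ℂ)).det)) := by
      refine tendsto_det_diag_sub _ _ (fun a b => ?_) z
      rw [tendsto_iff_dist_tendsto_zero]
      apply squeeze_zero (fun k => dist_nonneg) (fun k => ?_) hbaseφ
      rw [Complex.dist_eq]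
      exact E2 (φ k) i a b
    have h3 : (fun k => (Matrix.diagonal (fun _ : Fin m => z) - M i (φ k)).det)
        = fun k => (Matrix.diagonal (fun _ : Fin m => z) - N i (φ k)).det :=
      funext fun k => det_diag_sub_mul_comm (X i (φ k)) (hXdet i (φ k)) z
    rw [h3] at h1
    have h4 := tendsto_nhds_unique h1 h2
    rw [h4]
    have h5 : (Matrix.diagonal fun _ : Fin m => z) - (Matrix.diagonal fun j => (p i j : ℂ))
        = Matrix.diagonal (fun j => z - (p i j : ℂ)) := by
      rw [Matrix.diagonal_sub]
    rw [h5, Matrix.det_diagonal]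
  exact ⟨H, fun i => hermitian_eig_of_charfun (H i) (hherm i) (p i) (hchar i), hsum⟩

lemma cpMap_hornKraus_bd (s m : ℕ) (h' : Fin s → Matrix (Fin m) (Fin m) ℂ) :
    cpMap (hornKraus s m) (_root_.blockDiag h') = ∑ i, h' i := by
  rw [cpMap_hornKraus]
  ext a b
  simp [Matrix.sum_apply, bd_apply]

-- ===== end aux =====

/-- Theorem: there exist PSD Hermitian `H_1,…,H_s` with spectra `p(1),…,p(s)` summing to `I_m`
iff `T_m^s` is approximately scalable to `(I_{ms} → I_m, I_m → ⊕ diag p(i))` by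
`GL_m × (⊕ GL_m)`. -/
theorem stmt19 {s m : ℕ} (hs : 0 < s) (hm : 0 < m)
    (p : Fin s → Fin m → ℝ) (hpa : ∀ i, Antitone (p i)) (hp0 : ∀ i j, 0 < p i j) :
    (∃ H : Fin s → Matrix (Fin m) (Fin m) ℂ,
        (∀ i, ∃ U ∈ Matrix.unitaryGroup (Fin m) ℂ,
          H i = U * Matrix.diagonal (fun j => (p i j : ℂ)) * Uᴴ) ∧
        ∑ i, H i = 1)
    ↔
    (∀ ε : ℝ, 0 < ε →
      ∃ (g : Matrix (Fin m) (Fin m) ℂ) (h : Fin s → Matrix (Fin m) (Fin m) ℂ),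
        IsUnit g.det ∧ (∀ i, IsUnit (h i).det) ∧
        frob (gᴴ * cpMap (hornKraus s m) (blockDiag h * (blockDiag h)ᴴ) * g - 1) ≤ ε ∧
        frob ((blockDiag h)ᴴ * cpDual (hornKraus s m) (g * gᴴ) * blockDiag h -
          Matrix.diagonal (fun jb : Fin s × Fin m => (p jb.1 jb.2 : ℂ))) ≤ ε) := by
  
  constructor
  · rintro ⟨H, hHU, hHsum⟩ ε hε
    choose U hUmem hUeq using hHU
    set D : Fin s → Matrix (Fin m) (Fin m) ℂ :=
      fun i => Matrix.diagonal (fun j => (Real.sqrt (p i j) : ℂ)) with hD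
    have hDH : ∀ i, (D i)ᴴ = D i := by
      intro i
      have e : (star fun j => ((Real.sqrt (p i j)) : ℂ)) = fun j => ((Real.sqrt (p i j)) : ℂ) :=
        funext fun j => Complex.conj_ofReal _
      rw [hD, Matrix.diagonal_conjTranspose, e]
    have hDD : ∀ i, D i * D i = Matrix.diagonal fun j => (p i j : ℂ) := by
      intro i
      have e : (fun j => ((Real.sqrt (p i j) : ℂ)) * ((Real.sqrt (p i j) : ℂ)))
          = fun j => ((p i j : ℝ) : ℂ) := funext fun j => by
        rw [← Complex.ofReal_mul, Real.mul_self_sqrt (hp0 i j).le]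
      rw [hD, Matrix.diagonal_mul_diagonal, e]
    have hUU : ∀ i, (U i)ᴴ * U i = 1 := by
      intro i
      have := Matrix.mem_unitaryGroup_iff'.mp (hUmem i)
      rwa [Matrix.star_eq_conjTranspose] at this
    have hUU' : ∀ i, U i * (U i)ᴴ = 1 := by
      intro i
      have := Matrix.mem_unitaryGroup_iff.mp (hUmem i)
      rwa [Matrix.star_eq_conjTranspose] at this
    refine ⟨1, fun i => U i * D i, by simp, ?_, ?_, ?_⟩
    · intro i
      rw [Matrix.det_mul]
      have hU : IsUnit (U i).det :=
        IsUnit.of_mul_eq_one ((U i)ᴴ.det) (by rw [← Matrix.det_mul, hUU' i, Matrix.det_one])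
      refine hU.mul ?_
      rw [hD, Matrix.det_diagonal, isUnit_iff_ne_zero, Finset.prod_ne_zero_iff]
      intro j _
      simp only [ne_eq, Complex.ofReal_eq_zero]
      exact (Real.sqrt_pos.mpr (hp0 i j)).ne'
    · have hi : ∀ i, U i * D i * (U i * D i)ᴴ = H i := by
        intro i
        rw [Matrix.conjTranspose_mul, hDH i,
          show U i * D i * (D i * (U i)ᴴ) = U i * (D i * D i) * (U i)ᴴ from by noncomm_ring,
          hDD i]
        exact (hUeq i).symm
      have key : cpMap (hornKraus s m)
          (blockDiag (fun i => U i * D i) * (blockDiag (fun i => U i * D i))ᴴ) = 1 := by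
        rw [bd_conjT, bd_mul]
        have e : (fun i => U i * D i * (U i * D i)ᴴ) = H := funext hi
        rw [e, cpMap_hornKraus]
        ext a b
        rw [Matrix.of_apply, ← hHsum, Matrix.sum_apply]
        exact Finset.sum_congr rfl fun i _ => by rw [bd_apply]; simp
      rw [key]
      simp only [Matrix.conjTranspose_one, Matrix.one_mul, Matrix.mul_one, sub_self]
      rw [frob_zero]
      exact hε.le
    · have key : (blockDiag (fun i => U i * D i))ᴴ * cpDual (hornKraus s m) (1 * (1 : Matrix (Fin m) (Fin m) ℂ)ᴴ) *
          blockDiag (fun i => U i * D i) =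
          Matrix.diagonal (fun jb : Fin s × Fin m => (p jb.1 jb.2 : ℂ)) := by
        rw [Matrix.conjTranspose_one, Matrix.mul_one, cpDual_hornKraus,
          bd_conjT, bd_mul, bd_mul]
        have e : (fun i => (U i * D i)ᴴ * 1 * (U i * D i))
            = fun i => Matrix.diagonal (fun j => (p i j : ℂ)) := by
          funext i
          rw [Matrix.conjTranspose_mul, hDH i,
            show D i * (U i)ᴴ * 1 * (U i * D i) = D i * ((U i)ᴴ * U i) * D i from by noncomm_ring,
            hUU i, show D i * 1 * D i = D i * D i from by noncomm_ring, hDD i]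
        rw [e, bd_diag]
      rw [key, sub_self, frob_zero]
      exact hε.le
  · intro hyp
    have hchoice : ∀ k : ℕ, ∃ (g : Matrix (Fin m) (Fin m) ℂ)
        (h : Fin s → Matrix (Fin m) (Fin m) ℂ),
        IsUnit g.det ∧ (∀ i, IsUnit (h i).det) ∧
        frob (gᴴ * cpMap (hornKraus s m) (blockDiag h * (blockDiag h)ᴴ) * g - 1) ≤ 1/((k:ℝ)+1) ∧
        frob ((blockDiag h)ᴴ * cpDual (hornKraus s m) (g * gᴴ) * blockDiag h -
          Matrix.diagonal (fun jb : Fin s × Fin m => (p jb.1 jb.2 : ℂ))) ≤ 1/((k:ℝ)+1) :=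
      fun k => hyp (1/((k:ℝ)+1)) (by positivity)
    choose g h hg hh hc1 hc2 using hchoice
    set X : Fin s → ℕ → Matrix (Fin m) (Fin m) ℂ := fun i k => (g k)ᴴ * h k i with hXdef
    have hXdet : ∀ i k, IsUnit (X i k).det := by
      intro i k
      rw [hXdef]
      simp only []
      rw [Matrix.det_mul, Matrix.det_conjTranspose]
      exact ((hg k).star).mul (hh k i)
    have hre1 : ∀ k, (g k)ᴴ * cpMap (hornKraus s m)
        (blockDiag (h k) * (blockDiag (h k))ᴴ) * g k = ∑ i, X i k * (X i k)ᴴ := by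
      intro k
      rw [bd_conjT, bd_mul, cpMap_hornKraus_bd, Matrix.mul_sum, Matrix.sum_mul]
      refine Finset.sum_congr rfl fun i _ => ?_
      rw [hXdef]
      simp only []
      rw [Matrix.conjTranspose_mul, Matrix.conjTranspose_conjTranspose]
      simp only [Matrix.mul_assoc]
    have hre2 : ∀ k, (blockDiag (h k))ᴴ * cpDual (hornKraus s m) (g k * (g k)ᴴ) * blockDiag (h k)
        = _root_.blockDiag (fun i => (X i k)ᴴ * X i k) := by
      intro k
      rw [cpDual_hornKraus, bd_conjT, bd_mul, bd_mul]
      have e : (fun i => (h k i)ᴴ * (g k * (g k)ᴴ) * h k i)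
          = fun i => (X i k)ᴴ * X i k := by
        funext i
        rw [hXdef]
        simp only []
        rw [Matrix.conjTranspose_mul, Matrix.conjTranspose_conjTranspose]
        simp only [Matrix.mul_assoc]
      rw [e]
    have E1 : ∀ k (a b : Fin m), ‖(∑ i, X i k * (X i k)ᴴ) a b
        - (1 : Matrix (Fin m) (Fin m) ℂ) a b‖ ≤ 1/((k:ℝ)+1) := by
      intro k a b
      have h1 := hc1 k
      rw [hre1 k] at h1
      have h2 := (entry_le_frob _ a b).trans h1
      simpa [Matrix.sub_apply] using h2
    have E2 : ∀ k i (a b : Fin m), ‖((X i k)ᴴ * X i k) a b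
        - (Matrix.diagonal fun j => (p i j : ℂ)) a b‖ ≤ 1/((k:ℝ)+1) := by
      intro k i a b
      have h1 := hc2 k
      rw [hre2 k] at h1
      have h2 := (entry_le_frob _ (i,a) (i,b)).trans h1
      have h3 : (_root_.blockDiag (fun i' => (X i' k)ᴴ * X i' k)
          - Matrix.diagonal fun jb : Fin s × Fin m => (p jb.1 jb.2 : ℂ)) (i,a) (i,b)
          = ((X i k)ᴴ * X i k) a b - (Matrix.diagonal fun j => (p i j : ℂ)) a b := by
        rw [Matrix.sub_apply, bd_apply]
        simp only [if_pos rfl]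
        congr 1
        by_cases hab : a = b <;> simp [Matrix.diagonal_apply, Prod.ext_iff, hab]
      rwa [h3] at h2
    obtain ⟨H, hUH, hsum⟩ := approx_limit p X hXdet E1 E2
    exact ⟨H, hUH, hsum⟩
end
end
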